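/- arXiv:2406.12107 — 7 statements merged into one kernel-verified Lean document; each statement's English description precedes it below -/
import Mathlib

section
/- Let n ≥ 1 and let A, B ∈ GL(n,ℝ) be hyperbolic-like matrices such that each of the lines A_A, R_A differs from each of the lines A_B, R_B, and such that each of the image lines A(A_B), A(R_B) differs from each of A_B, R_B. Then AB ≠ BA. -/
/-- `lam` is a *dominant* eigenvalue of the real matrix `C`: it is a real root of the
characteristic polynomial of algebraic multiplicity 1, and `|lam| > max (|mu|, 1)` for
every other complex eigenvalue `mu` of `C`. -/
def IsDominantEigenvalue {n : ℕ} (C : Matrix (Fin n) (Fin n) ℝ) (lam : ℝ) : Prop :=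
  (Matrix.charpoly (C.map (Complex.ofReal))).roots.count (lam : ℂ) = 1 ∧
  1 < |lam| ∧
  ∀ mu ∈ (Matrix.charpoly (C.map (Complex.ofReal))).roots,
    mu ≠ (lam : ℂ) → ‖mu‖ < |lam|

/-- The eigenspace of the real matrix `C` for the eigenvalue `lam`, as a subspace of `ℝⁿ`. -/
noncomputable def eigLine {n : ℕ} (C : Matrix (Fin n) (Fin n) ℝ) (lam : ℝ) :
    Submodule ℝ (Fin n → ℝ) :=
  Module.End.eigenspace (Matrix.toLin' C) lam

/-- Proposition 2.3 of the paper: if `A`, `B` are hyperbolic-like matrices in `GL(n,ℝ)`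
(with dominant eigenvalues `lamA`, `lamB` and smallest eigenvalues `muA`, `muB`, where
`muA⁻¹`, `muB⁻¹` are the dominant eigenvalues of `A⁻¹`, `B⁻¹`) such that the attracting
and repelling lines of `A` differ from those of `B`, and the images under `A` of the
attracting and repelling lines of `B` differ from those lines, then `A` and `B` do not
commute. -/
theorem stmt3 (n : ℕ) (hn : 1 ≤ n) (A B : GL (Fin n) ℝ) (lamA muA lamB muB : ℝ)
    (hAdom : IsDominantEigenvalue (A : Matrix (Fin n) (Fin n) ℝ) lamA)
    (hAdom' : IsDominantEigenvalue ((A⁻¹ : GL (Fin n) ℝ) : Matrix (Fin n) (Fin n) ℝ) muA⁻¹)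
    (hBdom : IsDominantEigenvalue (B : Matrix (Fin n) (Fin n) ℝ) lamB)
    (hBdom' : IsDominantEigenvalue ((B⁻¹ : GL (Fin n) ℝ) : Matrix (Fin n) (Fin n) ℝ) muB⁻¹)
    (h1 : eigLine (A : Matrix (Fin n) (Fin n) ℝ) lamA ≠
      eigLine (B : Matrix (Fin n) (Fin n) ℝ) lamB)
    (h2 : eigLine (A : Matrix (Fin n) (Fin n) ℝ) lamA ≠
      eigLine (B : Matrix (Fin n) (Fin n) ℝ) muB)
    (h3 : eigLine (A : Matrix (Fin n) (Fin n) ℝ) muA ≠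
      eigLine (B : Matrix (Fin n) (Fin n) ℝ) lamB)
    (h4 : eigLine (A : Matrix (Fin n) (Fin n) ℝ) muA ≠
      eigLine (B : Matrix (Fin n) (Fin n) ℝ) muB)
    (h5 : Submodule.map (Matrix.toLin' (A : Matrix (Fin n) (Fin n) ℝ))
        (eigLine (B : Matrix (Fin n) (Fin n) ℝ) lamB) ≠
      eigLine (B : Matrix (Fin n) (Fin n) ℝ) lamB)
    (h6 : Submodule.map (Matrix.toLin' (A : Matrix (Fin n) (Fin n) ℝ))
        (eigLine (B : Matrix (Fin n) (Fin n) ℝ) lamB) ≠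
      eigLine (B : Matrix (Fin n) (Fin n) ℝ) muB)
    (h7 : Submodule.map (Matrix.toLin' (A : Matrix (Fin n) (Fin n) ℝ))
        (eigLine (B : Matrix (Fin n) (Fin n) ℝ) muB) ≠
      eigLine (B : Matrix (Fin n) (Fin n) ℝ) lamB)
    (h8 : Submodule.map (Matrix.toLin' (A : Matrix (Fin n) (Fin n) ℝ))
        (eigLine (B : Matrix (Fin n) (Fin n) ℝ) muB) ≠
      eigLine (B : Matrix (Fin n) (Fin n) ℝ) muB) :
    A * B ≠ B * A := by
  intro hc
  apply h5
  set MA : Matrix (Fin n) (Fin n) ℝ := (A : Matrix (Fin n) (Fin n) ℝ)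
  set MB : Matrix (Fin n) (Fin n) ℝ := (B : Matrix (Fin n) (Fin n) ℝ)
  have hcomm : MA * MB = MB * MA := by
    have := congrArg (Units.val) hc
    simpa [MA, MB] using this
  have hAinv : (((A⁻¹ : GL (Fin n) ℝ) : Matrix (Fin n) (Fin n) ℝ)) * MA = 1 := by
    show ((A⁻¹ : GL (Fin n) ℝ) : Matrix (Fin n) (Fin n) ℝ) * (A : Matrix (Fin n) (Fin n) ℝ) = 1
    rw [← Units.val_mul, inv_mul_cancel, Units.val_one]
  have hinj : Function.Injective (Matrix.toLin' MA) := by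
    have hleft : Matrix.toLin' ((A⁻¹ : GL (Fin n) ℝ) : Matrix (Fin n) (Fin n) ℝ) ∘ₗ
        Matrix.toLin' MA = LinearMap.id := by
      rw [← Matrix.toLin'_mul, hAinv, Matrix.toLin'_one]
    intro x y hxy
    have := congrArg (Matrix.toLin' ((A⁻¹ : GL (Fin n) ℝ) : Matrix (Fin n) (Fin n) ℝ)) hxy
    have hx := congrFun (congrArg (DFunLike.coe) hleft) x
    have hy := congrFun (congrArg (DFunLike.coe) hleft) y
    have : (Matrix.toLin' ((A⁻¹ : GL (Fin n) ℝ) : Matrix (Fin n) (Fin n) ℝ) ∘ₗ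
        Matrix.toLin' MA) x = (Matrix.toLin' ((A⁻¹ : GL (Fin n) ℝ) : Matrix (Fin n) (Fin n) ℝ) ∘ₗ
        Matrix.toLin' MA) y := this
    rw [hleft] at this
    simpa using this
  set E := eigLine MB lamB
  have hle : Submodule.map (Matrix.toLin' MA) E ≤ E := by
    rintro y ⟨x, hx, rfl⟩
    have hx' : Matrix.toLin' MB x = lamB • x := by
      have := (Module.End.mem_eigenspace_iff).mp hx
      simpa using this
    have : Matrix.toLin' MB (Matrix.toLin' MA x) = lamB • Matrix.toLin' MA x := by
      have hBA : Matrix.toLin' MB (Matrix.toLin' MA x) =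
          Matrix.toLin' MA (Matrix.toLin' MB x) := by
        have : Matrix.toLin' (MB * MA) x = Matrix.toLin' (MA * MB) x := by rw [hcomm]
        simpa [Matrix.toLin'_mul] using this
      rw [hBA, hx', map_smul]
    exact (Module.End.mem_eigenspace_iff).mpr this
  have hfr : Module.finrank ℝ E ≤ Module.finrank ℝ (Submodule.map (Matrix.toLin' MA) E) := by
    have := (Submodule.equivMapOfInjective (Matrix.toLin' MA) hinj E).finrank_eq
    omega
  exact Submodule.eq_of_le_of_finrank_le hle hfr
end

section
/- Let G be a group and ρ₂ : G → GL(2,ℂ) a group homomorphism. Let a, b ∈ G be such that each of the matrices ρ₂(a) and ρ₂(b) has two real eigenvalues λ, μ with |μ| < 1 < |λ|, and such that ρ₂(a) and ρ₂(b) have no common eigenvector in ℂ². Then there exists N ≥ 1 such that for all m, n ≥ N, the elements a^m and b^n freely generate a free subgroup of rank two in G. -/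
open Matrix Pointwise

local notation "Dd" => fun (x y : Fin 2 → ℂ) => x 0 * y 1 - x 1 * y 0

/-- The 2×2 complex matrix `C` is hyperbolic in the sense of the paper: it has two real
eigenvalues `lam`, `mu` with `|mu| < 1 < |lam|`. -/
def IsHyperbolic2 (C : Matrix (Fin 2) (Fin 2) ℂ) : Prop :=
  ∃ lam mu : ℝ, |mu| < 1 ∧ 1 < |lam| ∧
    Module.End.HasEigenvalue (Matrix.toLin' C) (lam : ℂ) ∧
    Module.End.HasEigenvalue (Matrix.toLin' C) (mu : ℂ)

noncomputable def Complex.abs : AbsoluteValue ℂ ℝ where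
  toFun := fun z => ‖z‖
  map_mul' := norm_mul
  nonneg' := norm_nonneg
  eq_zero' := fun _ => norm_eq_zero
  add_le' := norm_add_le

theorem Complex.abs_ofReal (r : ℝ) : Complex.abs (r : ℂ) = |r| := by
  simp [Complex.abs]


private lemma Dd_vec' (e f w : Fin 2 → ℂ) :
    Dd e f • w = Dd e w • f - Dd f w • e := by
  funext i
  fin_cases i <;> simp [Pi.smul_apply, smul_eq_mul] <;> ring

private lemma Dd_prop (x y : Fin 2 → ℂ) (hx : x ≠ 0) (h : Dd x y = 0) :
    ∃ c : ℂ, y = c • x := by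
  simp only at h
  by_cases h0 : x 0 = 0
  · have h1 : x 1 ≠ 0 := by
      intro h1; apply hx; funext i; fin_cases i <;> simp [h0, h1]
    have hy0 : y 0 = 0 := by
      have : x 1 * y 0 = 0 := by rw [h0] at h; linear_combination -h
      exact (mul_eq_zero.mp this).resolve_left h1
    refine ⟨y 1 / x 1, ?_⟩
    funext i
    fin_cases i
    · simp [Pi.smul_apply, smul_eq_mul, h0, hy0]
    · simp only [Pi.smul_apply, smul_eq_mul, Fin.mk_one, Fin.zero_eta]
      field_simp
  · refine ⟨y 0 / x 0, ?_⟩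
    funext i
    fin_cases i
    · simp only [Pi.smul_apply, smul_eq_mul, Fin.mk_one, Fin.zero_eta]
      field_simp
    · simp only [Pi.smul_apply, smul_eq_mul, Fin.mk_one, Fin.zero_eta]
      field_simp
      linear_combination h

private lemma Dd_zero_of (e f w : Fin 2 → ℂ) (hef : Dd e f ≠ 0)
    (h1 : Dd e w = 0) (h2 : Dd f w = 0) : w = 0 := by
  have hv := Dd_vec' e f w
  simp only at hv h1 h2 hef
  rw [h1, h2] at hv
  simp only [zero_smul, sub_zero] at hv
  rcases smul_eq_zero.mp hv with h | h
  · exact absurd h hef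
  · exact h


private lemma eig_D (M : Matrix (Fin 2) (Fin 2) ℂ) (u v w : Fin 2 → ℂ) (lam mu : ℂ)
    (hu : M *ᵥ u = lam • u) (hv : M *ᵥ v = mu • v) (huv : Dd u v ≠ 0) :
    Dd u (M *ᵥ w) = mu * Dd u w ∧ Dd v (M *ᵥ w) = lam * Dd v w := by
  have key : (Dd u v) • (M *ᵥ w) = Dd u w • (mu • v) - Dd v w • (lam • u) := by
    calc (Dd u v) • (M *ᵥ w) = M *ᵥ ((Dd u v) • w) := by rw [Matrix.mulVec_smul]
    _ = M *ᵥ (Dd u w • v - Dd v w • u) := by rw [Dd_vec']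
    _ = Dd u w • (M *ᵥ v) - Dd v w • (M *ᵥ u) := by
        rw [Matrix.mulVec_sub, Matrix.mulVec_smul, Matrix.mulVec_smul]
    _ = Dd u w • (mu • v) - Dd v w • (lam • u) := by rw [hu, hv]
  have k0 := congrFun key 0
  have k1 := congrFun key 1
  simp only [Pi.smul_apply, Pi.sub_apply, smul_eq_mul] at k0 k1
  constructor
  · apply mul_left_cancel₀ huv
    simp only
    linear_combination u 0 * k1 - u 1 * k0
  · apply mul_left_cancel₀ huv
    simp only
    linear_combination v 0 * k1 - v 1 * k0

private lemma eig_pow (M : Matrix (Fin 2) (Fin 2) ℂ) (u : Fin 2 → ℂ) (lam : ℂ)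
    (hu : M *ᵥ u = lam • u) (m : ℕ) : (M ^ m) *ᵥ u = (lam ^ m) • u := by
  induction m with
  | zero => simp [Matrix.one_mulVec]
  | succ n ih =>
      rw [pow_succ, ← Matrix.mulVec_mulVec, hu, Matrix.mulVec_smul, ih, smul_smul, pow_succ]
      ring_nf

private lemma disj_arith (K C x y c1 c2 c3 c4 eps : ℝ) (hKpos : 0 < K)
    (hC : C = c1 + c2 + c3 + c4 + 1) (heps : 0 < eps) (hle : eps ≤ K / (2 * C))
    (hx0 : 0 ≤ x) (hy0 : 0 ≤ y) (hc1 : 0 ≤ c1) (hc2 : 0 ≤ c2) (hc3 : 0 ≤ c3) (hc4 : 0 ≤ c4)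
    (b1 : K * x ≤ eps * x * c1 + eps * y * c2) (b2 : K * y ≤ eps * x * c3 + eps * y * c4) :
    x = 0 ∧ y = 0 := by
  have hCpos : 0 < C := by rw [hC]; linarith
  have hsum : K * (x + y) ≤ eps * C * (x + y) := by
    nlinarith [mul_nonneg (mul_nonneg heps.le hx0) hc2, mul_nonneg (mul_nonneg heps.le hx0) hc4,
      mul_nonneg heps.le hx0, mul_nonneg (mul_nonneg heps.le hy0) hc1,
      mul_nonneg (mul_nonneg heps.le hy0) hc3, mul_nonneg heps.le hy0]
  have hεC : eps * C ≤ K / 2 := by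
    have h2C : (0:ℝ) < 2 * C := by positivity
    have h3 := (le_div_iff₀ h2C).mp hle
    rw [show eps * (2 * C) = 2 * (eps * C) by ring] at h3
    linarith
  have hxy0 : x + y ≤ 0 := by
    by_contra hpos
    push_neg at hpos
    have h5 : eps * C * (x + y) ≤ K / 2 * (x + y) :=
      mul_le_mul_of_nonneg_right hεC (by linarith)
    have h6 : 0 < K * (x + y) := mul_pos hKpos hpos
    nlinarith
  constructor <;> linarith

private lemma disj_lemma (e1 f1 e2 f2 : Fin 2 → ℂ) (h1 : Dd e1 f1 ≠ 0) (h12 : Dd e1 e2 ≠ 0) :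
    ∃ ε₀ : ℝ, 0 < ε₀ ∧ ∀ ε : ℝ, 0 < ε → ε ≤ ε₀ → ∀ w : Fin 2 → ℂ, w ≠ 0 →
      Complex.abs (Dd e1 w) ≤ ε * Complex.abs (Dd f1 w) →
      Complex.abs (Dd e2 w) ≤ ε * Complex.abs (Dd f2 w) → False  := by
  set K := Complex.abs (Dd e1 e2) with hK
  have hKpos : 0 < K := by
    simpa [hK] using (AbsoluteValue.pos Complex.abs h12)
  set c1 := Complex.abs (Dd f1 e2) with hc1d
  set c2 := Complex.abs (Dd f1 e1) with hc2d
  set c3 := Complex.abs (Dd f2 e2) with hc3d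
  set c4 := Complex.abs (Dd f2 e1) with hc4d
  set C := c1 + c2 + c3 + c4 + 1 with hC
  have hCpos : 0 < C := by positivity
  refine ⟨K / (2 * C), by positivity, ?_⟩
  intro ε hε hεle w hw hb1 hb2
  set x := Complex.abs (Dd f1 w) with hx
  set y := Complex.abs (Dd f2 w) with hy
  have i1 : Dd e1 e2 * Dd f1 w = Dd e1 w * Dd f1 e2 - Dd e2 w * Dd f1 e1 := by ring
  have i2 : Dd e1 e2 * Dd f2 w = Dd e1 w * Dd f2 e2 - Dd e2 w * Dd f2 e1 := by ring
  have b1 : K * x ≤ ε * x * c1 + ε * y * c2 := by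
    calc K * x = Complex.abs (Dd e1 e2 * Dd f1 w) := (map_mul Complex.abs _ _).symm
    _ = Complex.abs (Dd e1 w * Dd f1 e2 - Dd e2 w * Dd f1 e1) := by rw [i1]
    _ ≤ Complex.abs (Dd e1 w * Dd f1 e2) + Complex.abs (Dd e2 w * Dd f1 e1) :=
        AbsoluteValue.sub_le_add _ _ _
    _ = Complex.abs (Dd e1 w) * c1 + Complex.abs (Dd e2 w) * c2 := by
        rw [_root_.map_mul, _root_.map_mul]
    _ ≤ (ε * x) * c1 + (ε * y) * c2 := by
        apply add_le_add <;> apply mul_le_mul_of_nonneg_right <;>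
          first | assumption | positivity
    _ = ε * x * c1 + ε * y * c2 := by ring
  have b2 : K * y ≤ ε * x * c3 + ε * y * c4 := by
    calc K * y = Complex.abs (Dd e1 e2 * Dd f2 w) := (map_mul Complex.abs _ _).symm
    _ = Complex.abs (Dd e1 w * Dd f2 e2 - Dd e2 w * Dd f2 e1) := by rw [i2]
    _ ≤ Complex.abs (Dd e1 w * Dd f2 e2) + Complex.abs (Dd e2 w * Dd f2 e1) :=
        AbsoluteValue.sub_le_add _ _ _
    _ = Complex.abs (Dd e1 w) * c3 + Complex.abs (Dd e2 w) * c4 := by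
        rw [_root_.map_mul, _root_.map_mul]
    _ ≤ (ε * x) * c3 + (ε * y) * c4 := by
        apply add_le_add <;> apply mul_le_mul_of_nonneg_right <;>
          first | assumption | positivity
    _ = ε * x * c3 + ε * y * c4 := by ring
  obtain ⟨hxx, hyy⟩ := disj_arith K C x y c1 c2 c3 c4 ε hKpos hC hε hεle
    (AbsoluteValue.nonneg _ _) (AbsoluteValue.nonneg _ _) (AbsoluteValue.nonneg _ _)
    (AbsoluteValue.nonneg _ _) (AbsoluteValue.nonneg _ _) (AbsoluteValue.nonneg _ _) b1 b2
  have hf1 : Dd f1 w = 0 := by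
    have h0 : Complex.abs (Dd f1 w) = 0 := by rw [← hx]; exact hxx
    exact (AbsoluteValue.eq_zero Complex.abs).mp h0
  have he1 : Dd e1 w = 0 := by
    have h0 : Complex.abs (Dd e1 w) ≤ 0 := by
      calc Complex.abs (Dd e1 w) ≤ ε * x := hb1
      _ = 0 := by rw [hxx, mul_zero]
    exact (AbsoluteValue.eq_zero Complex.abs).mp (le_antisymm h0 (AbsoluteValue.nonneg _ _))
  exact hw (Dd_zero_of e1 f1 w h1 he1 hf1)




private lemma GL_mulVec_ne (A : GL (Fin 2) ℂ) (w : Fin 2 → ℂ) (hw : w ≠ 0) :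
    (↑A : Matrix (Fin 2) (Fin 2) ℂ) *ᵥ w ≠ 0 := by
  intro h
  apply hw
  have hinv : (↑(A⁻¹) : Matrix (Fin 2) (Fin 2) ℂ) * (↑A : Matrix (Fin 2) (Fin 2) ℂ) = 1 := by
    rw [← Units.val_mul, inv_mul_cancel, Units.val_one]
  have h2 : (↑(A⁻¹) : Matrix (Fin 2) (Fin 2) ℂ) *ᵥ ((↑A : Matrix (Fin 2) (Fin 2) ℂ) *ᵥ w) = w := by
    rw [Matrix.mulVec_mulVec, hinv, Matrix.one_mulVec]
  rw [h, Matrix.mulVec_zero] at h2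
  exact h2.symm

private lemma hyp_data (A : GL (Fin 2) ℂ) (h : IsHyperbolic2 ((A : GL (Fin 2) ℂ) : Matrix (Fin 2) (Fin 2) ℂ)) :
    ∃ (lam mu : ℝ) (u v : Fin 2 → ℂ), u ≠ 0 ∧ v ≠ 0 ∧ |mu| < 1 ∧ 1 < |lam| ∧ mu ≠ 0 ∧
      (↑A : Matrix (Fin 2) (Fin 2) ℂ) *ᵥ u = (lam : ℂ) • u ∧
      (↑A : Matrix (Fin 2) (Fin 2) ℂ) *ᵥ v = (mu : ℂ) • v ∧
      (↑(A⁻¹) : Matrix (Fin 2) (Fin 2) ℂ) *ᵥ u = ((lam : ℂ))⁻¹ • u ∧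
      (↑(A⁻¹) : Matrix (Fin 2) (Fin 2) ℂ) *ᵥ v = ((mu : ℂ))⁻¹ • v ∧
      Dd u v ≠ 0 := by
  obtain ⟨lam, mu, hmu, hlam, hElam, hEmu⟩ := h
  obtain ⟨u, hu⟩ := hElam.exists_hasEigenvector
  obtain ⟨v, hv⟩ := hEmu.exists_hasEigenvector
  have hu0 : u ≠ 0 := hu.right
  have hv0 : v ≠ 0 := hv.right
  have hAu : (↑A : Matrix (Fin 2) (Fin 2) ℂ) *ᵥ u = (lam : ℂ) • u := by
    rw [← Matrix.toLin'_apply]; exact hu.apply_eq_smul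
  have hAv : (↑A : Matrix (Fin 2) (Fin 2) ℂ) *ᵥ v = (mu : ℂ) • v := by
    rw [← Matrix.toLin'_apply]; exact hv.apply_eq_smul
  have hmu0 : mu ≠ 0 := by
    rintro rfl
    apply GL_mulVec_ne A v hv0
    rw [hAv]; simp
  have hlam0 : (lam : ℂ) ≠ 0 := by
    intro h0
    have : lam = 0 := by exact_mod_cast h0
    rw [this] at hlam; simp at hlam; linarith
  have hmu0' : (mu : ℂ) ≠ 0 := by exact_mod_cast hmu0
  have hinv : (↑(A⁻¹) : Matrix (Fin 2) (Fin 2) ℂ) * (↑A : Matrix (Fin 2) (Fin 2) ℂ) = 1 := by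
    rw [← Units.val_mul, inv_mul_cancel, Units.val_one]
  have hAinv : ∀ (w : Fin 2 → ℂ) (c : ℂ), c ≠ 0 →
      (↑A : Matrix (Fin 2) (Fin 2) ℂ) *ᵥ w = c • w →
      (↑(A⁻¹) : Matrix (Fin 2) (Fin 2) ℂ) *ᵥ w = c⁻¹ • w := by
    intro w c hc hw
    have h1 : (↑(A⁻¹) : Matrix (Fin 2) (Fin 2) ℂ) *ᵥ ((↑A : Matrix (Fin 2) (Fin 2) ℂ) *ᵥ w) = w := by
      rw [Matrix.mulVec_mulVec, hinv, Matrix.one_mulVec]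
    rw [hw, Matrix.mulVec_smul] at h1
    calc (↑(A⁻¹) : Matrix (Fin 2) (Fin 2) ℂ) *ᵥ w
        = c⁻¹ • (c • ((↑(A⁻¹) : Matrix (Fin 2) (Fin 2) ℂ) *ᵥ w)) := by
          rw [smul_smul, inv_mul_cancel₀ hc, one_smul]
    _ = c⁻¹ • w := by rw [h1]
  have hDuv : Dd u v ≠ 0 := by
    intro h0
    obtain ⟨c, rfl⟩ := Dd_prop u v hu0 h0
    have hc : c ≠ 0 := by rintro rfl; simp at hv0
    rw [Matrix.mulVec_smul, hAu, smul_comm (mu:ℂ) c] at hAv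
    have := smul_right_injective (Fin 2 → ℂ) hc hAv
    have hlm : lam = mu := by
      have h2 : ((lam : ℂ) - mu) • u = 0 := by rw [sub_smul, this, sub_self]
      rcases smul_eq_zero.mp h2 with h3 | h3
      · exact_mod_cast sub_eq_zero.mp h3
      · exact absurd h3 hu0
    rw [hlm] at hlam
    linarith [hmu]
  exact ⟨lam, mu, u, v, hu0, hv0, hmu, hlam, hmu0, hAu, hAv,
    hAinv u _ hlam0 hAu, hAinv v _ hmu0' hAv, hDuv⟩

private lemma ineq_step (p l t s ε : ℝ) (hε : 0 < ε) (ht : 0 ≤ t) (hl : 0 ≤ l)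
    (hpow : p ≤ ε ^ 2 * l) (hst : ε * t < s) : p * t ≤ ε * (l * s) := by
  nlinarith [mul_le_mul_of_nonneg_right hpow ht,
    mul_le_mul_of_nonneg_left hst.le (mul_nonneg hε.le hl)]

private lemma ineq_step2 (P L t s ε : ℝ) (hε : 0 < ε) (hs : 0 ≤ s) (hP : 0 < P) (hL : 0 < L)
    (hpow : P ≤ ε ^ 2 * L) (hst : ε * s < t) : L⁻¹ * s ≤ ε * (P⁻¹ * t) := by
  have key : P * s ≤ ε * L * t := by
    nlinarith [mul_le_mul_of_nonneg_right hpow hs,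
      mul_le_mul_of_nonneg_left hst.le (mul_nonneg hε.le hL.le)]
  have h2 : s / L ≤ ε * t / P := by
    rw [div_le_div_iff₀ hL hP]; nlinarith [key]
  rw [show L⁻¹ * s = s / L from by ring, show ε * (P⁻¹ * t) = ε * t / P from by ring]
  exact h2

private lemma pow_bound (lam mu ε : ℝ) (hmu : |mu| < 1) (hlam : 1 < |lam|) (hε : 0 < ε) :
    ∃ N : ℕ, ∀ m, N ≤ m → |mu| ^ m ≤ ε ^ 2 * |lam| ^ m := by
  have hl0 : (0:ℝ) < |lam| := by linarith
  set r := |mu| / |lam| with hr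
  have hr0 : 0 ≤ r := div_nonneg (abs_nonneg _) hl0.le
  have hr1 : r < 1 := (div_lt_one hl0).mpr (by linarith)
  obtain ⟨n, hn⟩ := exists_pow_lt_of_lt_one (by positivity : (0:ℝ) < ε ^ 2) hr1
  refine ⟨n, fun m hm => ?_⟩
  have h1 : r ^ m ≤ ε ^ 2 := le_trans (pow_le_pow_of_le_one hr0 hr1.le hm) hn.le
  have hlm : 0 < |lam| ^ m := pow_pos hl0 m
  rw [hr, div_pow, div_le_iff₀ hlm] at h1
  linarith

universe u v

private theorem pingpong_poly {ι : Type} [Nontrivial ι] {G : Type u} [Group G] (f : ι → G)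
    {α : Type v} [MulAction G α] (X Y : ι → Set α)
    (hXnonempty : ∀ i, (X i).Nonempty)
    (hXdisj : Pairwise (Function.onFun Disjoint X))
    (hYdisj : Pairwise (Function.onFun Disjoint Y))
    (hXYdisj : ∀ i j, Disjoint (X i) (Y j))
    (hX : ∀ i, f i • (Y i)ᶜ ⊆ X i)
    (hY : ∀ i, f⁻¹ i • (X i)ᶜ ⊆ Y i) :
    Function.Injective (FreeGroup.lift f : FreeGroup ι →* G) := by
  let f' : ULift.{u} ι → G := fun i => f i.down
  have hinj := FreeGroup.injective_lift_of_ping_pong f' (fun i => X i.down) (fun i => Y i.down)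
    (fun i => hXnonempty i.down)
    (fun i j hij => hXdisj (fun hd => hij (ULift.down_injective hd)))
    (fun i j hij => hYdisj (fun hd => hij (ULift.down_injective hd)))
    (fun i j => hXYdisj i.down j.down)
    (fun i => hX i.down)
    (fun i => hY i.down)
  have key : (FreeGroup.lift f : FreeGroup ι →* G)
      = (FreeGroup.lift f').comp (FreeGroup.freeGroupCongr Equiv.ulift.symm).toMonoidHom := by
    ext i
    simp [f']
  rw [key]
  exact hinj.comp (MulEquiv.injective _)

/-- Proposition 2.4 of the paper: if `ρ₂ : G → GL(2,ℂ)` is a homomorphism sending `a` and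
`b` to hyperbolic matrices with no common eigenvector, then sufficiently high powers of
`a` and `b` freely generate a free subgroup of rank two in `G`. -/
theorem stmt4 {G : Type*} [Group G] (ρ₂ : G →* GL (Fin 2) ℂ) (a b : G)
    (ha : IsHyperbolic2 ((ρ₂ a : GL (Fin 2) ℂ) : Matrix (Fin 2) (Fin 2) ℂ))
    (hb : IsHyperbolic2 ((ρ₂ b : GL (Fin 2) ℂ) : Matrix (Fin 2) (Fin 2) ℂ))
    (hcommon : ¬ ∃ v : Fin 2 → ℂ, v ≠ 0 ∧
      (∃ c : ℂ, Matrix.mulVec ((ρ₂ a : GL (Fin 2) ℂ) : Matrix (Fin 2) (Fin 2) ℂ) v = c • v) ∧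
      (∃ c : ℂ, Matrix.mulVec ((ρ₂ b : GL (Fin 2) ℂ) : Matrix (Fin 2) (Fin 2) ℂ) v = c • v)) :
    ∃ N : ℕ, 1 ≤ N ∧ ∀ m n : ℕ, N ≤ m → N ≤ n →
      Function.Injective (FreeGroup.lift ![a ^ m, b ^ n] : FreeGroup (Fin 2) →* G) := by
  obtain ⟨lamA, muA, uA, vA, huA0, hvA0, hmuA1, hlamA1, hmuA0, hAu, hAv, hAiu, hAiv, hDA⟩ :=
    hyp_data (ρ₂ a) ha
  obtain ⟨lamB, muB, uB, vB, huB0, hvB0, hmuB1, hlamB1, hmuB0, hBu, hBv, hBiu, hBiv, hDB⟩ :=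
    hyp_data (ρ₂ b) hb
  have cross : ∀ (e f : Fin 2 → ℂ) (ce cf : ℂ), e ≠ 0 → f ≠ 0 →
      (↑(ρ₂ a) : Matrix (Fin 2) (Fin 2) ℂ) *ᵥ e = ce • e →
      (↑(ρ₂ b) : Matrix (Fin 2) (Fin 2) ℂ) *ᵥ f = cf • f → Dd e f ≠ 0 := by
    intro e f ce cf he hf hae hbf h0
    obtain ⟨c, rfl⟩ := Dd_prop e f he h0
    have hc : c ≠ 0 := fun h => hf (by rw [h, zero_smul])
    apply hcommon
    refine ⟨e, he, ⟨ce, hae⟩, ⟨cf, ?_⟩⟩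
    rw [Matrix.mulVec_smul, smul_comm cf c] at hbf
    exact smul_right_injective (Fin 2 → ℂ) hc hbf
  have d1 : Dd uA uB ≠ 0 := cross uA uB _ _ huA0 huB0 hAu hBu
  have d2 : Dd uA vB ≠ 0 := cross uA vB _ _ huA0 hvB0 hAu hBv
  have d3 : Dd vA uB ≠ 0 := cross vA uB _ _ hvA0 huB0 hAv hBu
  have d4 : Dd vA vB ≠ 0 := cross vA vB _ _ hvA0 hvB0 hAv hBv
  have hDA' : Dd vA uA ≠ 0 := fun h => hDA (by simp only; linear_combination -h)
  have hDB' : Dd vB uB ≠ 0 := fun h => hDB (by simp only; linear_combination -h)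
  have d3' : Dd uB vA ≠ 0 := fun h => d3 (by simp only; linear_combination -h)
  obtain ⟨e1, he1, H1⟩ := disj_lemma uA vA uB vB hDA d1
  obtain ⟨e2, he2, H2⟩ := disj_lemma vA uA vB uB hDA' d4
  obtain ⟨e3, he3, H3⟩ := disj_lemma uA vA vA uA hDA hDA
  obtain ⟨e4, he4, H4⟩ := disj_lemma uA vA vB uB hDA d2
  obtain ⟨e5, he5, H5⟩ := disj_lemma uB vB vA uA hDB d3'
  obtain ⟨e6, he6, H6⟩ := disj_lemma uB vB vB uB hDB hDB
  set ε := min (min e1 e2) (min (min e3 e4) (min e5 e6)) with hεdef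
  have hε : 0 < ε := lt_min (lt_min he1 he2) (lt_min (lt_min he3 he4) (lt_min he5 he6))
  have le1 : ε ≤ e1 := le_trans (min_le_left _ _) (min_le_left _ _)
  have le2 : ε ≤ e2 := le_trans (min_le_left _ _) (min_le_right _ _)
  have le3 : ε ≤ e3 := le_trans (min_le_right _ _) (le_trans (min_le_left _ _) (min_le_left _ _))
  have le4 : ε ≤ e4 := le_trans (min_le_right _ _) (le_trans (min_le_left _ _) (min_le_right _ _))
  have le5 : ε ≤ e5 := le_trans (min_le_right _ _) (le_trans (min_le_right _ _) (min_le_left _ _))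
  have le6 : ε ≤ e6 := le_trans (min_le_right _ _) (le_trans (min_le_right _ _) (min_le_right _ _))
  obtain ⟨Na, hNa⟩ := pow_bound lamA muA ε hmuA1 hlamA1 hε
  obtain ⟨Nb, hNb⟩ := pow_bound lamB muB ε hmuB1 hlamB1 hε
  refine ⟨max 1 (max Na Nb), le_max_left _ _, ?_⟩
  intro m n hm hn
  have hma : Na ≤ m := le_trans (le_trans (le_max_left _ _) (le_max_right _ _)) hm
  have hnb : Nb ≤ n := le_trans (le_trans (le_max_right _ _) (le_max_right _ _)) hn
  letI : SMul G {w : Fin 2 → ℂ // w ≠ 0} :=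
    ⟨fun g x => ⟨(↑(ρ₂ g) : Matrix (Fin 2) (Fin 2) ℂ) *ᵥ x.1, GL_mulVec_ne _ _ x.2⟩⟩
  letI : MulAction G {w : Fin 2 → ℂ // w ≠ 0} :=
    { one_smul := by
        intro x
        apply Subtype.ext
        show (↑(ρ₂ 1) : Matrix (Fin 2) (Fin 2) ℂ) *ᵥ x.1 = x.1
        rw [_root_.map_one, Units.val_one, Matrix.one_mulVec]
      mul_smul := by
        intro g h x
        apply Subtype.ext
        show (↑(ρ₂ (g * h)) : Matrix (Fin 2) (Fin 2) ℂ) *ᵥ x.1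
          = (↑(ρ₂ g) : Matrix (Fin 2) (Fin 2) ℂ) *ᵥ ((↑(ρ₂ h) : Matrix (Fin 2) (Fin 2) ℂ) *ᵥ x.1)
        rw [_root_.map_mul, Units.val_mul, Matrix.mulVec_mulVec] }
  set Xa : Set {w : Fin 2 → ℂ // w ≠ 0} :=
    {x | Complex.abs (Dd uA x.1) ≤ ε * Complex.abs (Dd vA x.1)} with hXa
  set Xb : Set {w : Fin 2 → ℂ // w ≠ 0} :=
    {x | Complex.abs (Dd uB x.1) ≤ ε * Complex.abs (Dd vB x.1)} with hXb
  set Ya : Set {w : Fin 2 → ℂ // w ≠ 0} :=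
    {x | Complex.abs (Dd vA x.1) ≤ ε * Complex.abs (Dd uA x.1)} with hYa
  set Yb : Set {w : Fin 2 → ℂ // w ≠ 0} :=
    {x | Complex.abs (Dd vB x.1) ≤ ε * Complex.abs (Dd uB x.1)} with hYb
  have DXaXb : Disjoint Xa Xb := by
    rw [Set.disjoint_left]
    intro x hx1 hx2
    exact H1 ε hε le1 x.1 x.2 hx1 hx2
  have DYaYb : Disjoint Ya Yb := by
    rw [Set.disjoint_left]
    intro x hx1 hx2
    exact H2 ε hε le2 x.1 x.2 hx1 hx2
  have DXaYa : Disjoint Xa Ya := by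
    rw [Set.disjoint_left]
    intro x hx1 hx2
    exact H3 ε hε le3 x.1 x.2 hx1 hx2
  have DXaYb : Disjoint Xa Yb := by
    rw [Set.disjoint_left]
    intro x hx1 hx2
    exact H4 ε hε le4 x.1 x.2 hx1 hx2
  have DXbYa : Disjoint Xb Ya := by
    rw [Set.disjoint_left]
    intro x hx1 hx2
    exact H5 ε hε le5 x.1 x.2 hx1 hx2
  have DXbYb : Disjoint Xb Yb := by
    rw [Set.disjoint_left]
    intro x hx1 hx2
    exact H6 ε hε le6 x.1 x.2 hx1 hx2
  have memXa : ∀ x : {w : Fin 2 → ℂ // w ≠ 0}, x ∈ Xa ↔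
      Complex.abs (Dd uA x.1) ≤ ε * Complex.abs (Dd vA x.1) := fun _ => Iff.rfl
  -- dynamics
  have dynA : ∀ y : {w : Fin 2 → ℂ // w ≠ 0}, y ∉ Ya → (a ^ m) • y ∈ Xa := by
    intro y hy
    have hy' : ε * Complex.abs (Dd uA y.1) < Complex.abs (Dd vA y.1) := by
      rw [hYa, Set.mem_setOf_eq, not_le] at hy
      exact hy
    have hcoe : (((a ^ m) • y : {w : Fin 2 → ℂ // w ≠ 0}) : Fin 2 → ℂ)
        = ((↑(ρ₂ a) : Matrix (Fin 2) (Fin 2) ℂ) ^ m) *ᵥ y.1 := by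
      show (↑(ρ₂ (a ^ m)) : Matrix (Fin 2) (Fin 2) ℂ) *ᵥ y.1 = _
      rw [map_pow, Units.val_pow_eq_pow_val]
    rw [hXa, Set.mem_setOf_eq, hcoe]
    obtain ⟨hD1, hD2⟩ := eig_D ((↑(ρ₂ a) : Matrix (Fin 2) (Fin 2) ℂ) ^ m) uA vA y.1
      ((lamA : ℂ) ^ m) ((muA : ℂ) ^ m) (eig_pow _ _ _ hAu m) (eig_pow _ _ _ hAv m) hDA
    rw [hD1, hD2, _root_.map_mul, _root_.map_mul, map_pow, map_pow,
      Complex.abs_ofReal, Complex.abs_ofReal]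
    exact ineq_step _ _ _ _ ε hε (AbsoluteValue.nonneg _ _) (by positivity) (hNa m hma) hy'
  have dynB : ∀ y : {w : Fin 2 → ℂ // w ≠ 0}, y ∉ Yb → (b ^ n) • y ∈ Xb := by
    intro y hy
    have hy' : ε * Complex.abs (Dd uB y.1) < Complex.abs (Dd vB y.1) := by
      rw [hYb, Set.mem_setOf_eq, not_le] at hy
      exact hy
    have hcoe : (((b ^ n) • y : {w : Fin 2 → ℂ // w ≠ 0}) : Fin 2 → ℂ)
        = ((↑(ρ₂ b) : Matrix (Fin 2) (Fin 2) ℂ) ^ n) *ᵥ y.1 := by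
      show (↑(ρ₂ (b ^ n)) : Matrix (Fin 2) (Fin 2) ℂ) *ᵥ y.1 = _
      rw [map_pow, Units.val_pow_eq_pow_val]
    rw [hXb, Set.mem_setOf_eq, hcoe]
    obtain ⟨hD1, hD2⟩ := eig_D ((↑(ρ₂ b) : Matrix (Fin 2) (Fin 2) ℂ) ^ n) uB vB y.1
      ((lamB : ℂ) ^ n) ((muB : ℂ) ^ n) (eig_pow _ _ _ hBu n) (eig_pow _ _ _ hBv n) hDB
    rw [hD1, hD2, _root_.map_mul, _root_.map_mul, map_pow, map_pow,
      Complex.abs_ofReal, Complex.abs_ofReal]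
    exact ineq_step _ _ _ _ ε hε (AbsoluteValue.nonneg _ _) (by positivity) (hNb n hnb) hy'
  have dynA' : ∀ y : {w : Fin 2 → ℂ // w ≠ 0}, y ∉ Xa → (a ^ m)⁻¹ • y ∈ Ya := by
    intro y hy
    have hy' : ε * Complex.abs (Dd vA y.1) < Complex.abs (Dd uA y.1) := by
      rw [hXa, Set.mem_setOf_eq, not_le] at hy
      exact hy
    have hcoe : (((a ^ m)⁻¹ • y : {w : Fin 2 → ℂ // w ≠ 0}) : Fin 2 → ℂ)
        = ((↑((ρ₂ a)⁻¹) : Matrix (Fin 2) (Fin 2) ℂ) ^ m) *ᵥ y.1 := by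
      show (↑(ρ₂ ((a ^ m)⁻¹)) : Matrix (Fin 2) (Fin 2) ℂ) *ᵥ y.1 = _
      rw [← inv_pow, map_pow, map_inv, Units.val_pow_eq_pow_val]
    rw [hYa, Set.mem_setOf_eq, hcoe]
    obtain ⟨hD1, hD2⟩ := eig_D ((↑((ρ₂ a)⁻¹) : Matrix (Fin 2) (Fin 2) ℂ) ^ m) uA vA y.1
      (((lamA : ℂ))⁻¹ ^ m) (((muA : ℂ))⁻¹ ^ m) (eig_pow _ _ _ hAiu m) (eig_pow _ _ _ hAiv m) hDA
    rw [hD1, hD2, _root_.map_mul, _root_.map_mul, map_pow, map_pow, map_inv₀, map_inv₀,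
      Complex.abs_ofReal, Complex.abs_ofReal, inv_pow, inv_pow]
    exact ineq_step2 (|muA| ^ m) (|lamA| ^ m) _ _ ε hε (AbsoluteValue.nonneg _ _)
      (pow_pos (abs_pos.mpr hmuA0) m) (pow_pos (by linarith : (0:ℝ) < |lamA|) m)
      (hNa m hma) hy'
  have dynB' : ∀ y : {w : Fin 2 → ℂ // w ≠ 0}, y ∉ Xb → (b ^ n)⁻¹ • y ∈ Yb := by
    intro y hy
    have hy' : ε * Complex.abs (Dd vB y.1) < Complex.abs (Dd uB y.1) := by
      rw [hXb, Set.mem_setOf_eq, not_le] at hy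
      exact hy
    have hcoe : (((b ^ n)⁻¹ • y : {w : Fin 2 → ℂ // w ≠ 0}) : Fin 2 → ℂ)
        = ((↑((ρ₂ b)⁻¹) : Matrix (Fin 2) (Fin 2) ℂ) ^ n) *ᵥ y.1 := by
      show (↑(ρ₂ ((b ^ n)⁻¹)) : Matrix (Fin 2) (Fin 2) ℂ) *ᵥ y.1 = _
      rw [← inv_pow, map_pow, map_inv, Units.val_pow_eq_pow_val]
    rw [hYb, Set.mem_setOf_eq, hcoe]
    obtain ⟨hD1, hD2⟩ := eig_D ((↑((ρ₂ b)⁻¹) : Matrix (Fin 2) (Fin 2) ℂ) ^ n) uB vB y.1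
      (((lamB : ℂ))⁻¹ ^ n) (((muB : ℂ))⁻¹ ^ n) (eig_pow _ _ _ hBiu n) (eig_pow _ _ _ hBiv n) hDB
    rw [hD1, hD2, _root_.map_mul, _root_.map_mul, map_pow, map_pow, map_inv₀, map_inv₀,
      Complex.abs_ofReal, Complex.abs_ofReal, inv_pow, inv_pow]
    exact ineq_step2 (|muB| ^ n) (|lamB| ^ n) _ _ ε hε (AbsoluteValue.nonneg _ _)
      (pow_pos (abs_pos.mpr hmuB0) n) (pow_pos (by linarith : (0:ℝ) < |lamB|) n)
      (hNb n hnb) hy'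
  -- ping-pong
  apply pingpong_poly ![a ^ m, b ^ n] ![Xa, Xb] ![Ya, Yb]
  · intro i
    fin_cases i
    · refine ⟨⟨uA, huA0⟩, ?_⟩
      show Complex.abs (uA 0 * uA 1 - uA 1 * uA 0) ≤ ε * Complex.abs (Dd vA uA)
      rw [show uA 0 * uA 1 - uA 1 * uA 0 = 0 from by ring]
      simp only [map_zero]
      positivity
    · refine ⟨⟨uB, huB0⟩, ?_⟩
      show Complex.abs (uB 0 * uB 1 - uB 1 * uB 0) ≤ ε * Complex.abs (Dd vB uB)
      rw [show uB 0 * uB 1 - uB 1 * uB 0 = 0 from by ring]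
      simp only [map_zero]
      positivity
  · intro i j hij
    fin_cases i <;> fin_cases j <;>
      first
        | exact absurd rfl hij
        | exact DXaXb
        | exact DXaXb.symm
  · intro i j hij
    fin_cases i <;> fin_cases j <;>
      first
        | exact absurd rfl hij
        | exact DYaYb
        | exact DYaYb.symm
  · intro i j
    fin_cases i <;> fin_cases j
    · exact DXaYa
    · exact DXaYb
    · exact DXbYa
    · exact DXbYb
  · intro i
    fin_cases i
    · rintro x ⟨y, hy, rfl⟩
      exact dynA y hy
    · rintro x ⟨y, hy, rfl⟩
      exact dynB y hy
  · intro i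
    fin_cases i
    · rintro x ⟨y, hy, rfl⟩
      exact dynA' y hy
    · rintro x ⟨y, hy, rfl⟩
      exact dynB' y hy
end

section
/- Let β = 2^{1/4}, and let P = [[5+β²−3β−2β³, 1],[−1, 0]] and Q = [[3+2β², 1],[−1, 0]] in SL(2,ℝ). Then there exists N₀ ≥ 1 such that for all N ≥ N₀, the matrices P^N and Q^N freely generate a free subgroup of rank two of SL(2,ℝ) (no nontrivial reduced word in P^N and Q^N equals the identity matrix). -/
/-- `β = 2^(1/4)`, the real fourth root of `2`. -/
noncomputable def rootBeta : ℝ := (2 : ℝ) ^ ((1 : ℝ) / 4)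

/-- The matrix `P = [[5+β²−3β−2β³, 1],[−1, 0]] ∈ SL(2,ℝ)`. -/
noncomputable def matP : Matrix.SpecialLinearGroup (Fin 2) ℝ :=
  ⟨!![5 + rootBeta ^ 2 - 3 * rootBeta - 2 * rootBeta ^ 3, 1; -1, 0], by
    simp [Matrix.det_fin_two_of]⟩

/-- The matrix `Q = [[3+2β², 1],[−1, 0]] ∈ SL(2,ℝ)`. -/
noncomputable def matQ : Matrix.SpecialLinearGroup (Fin 2) ℝ :=
  ⟨!![3 + 2 * rootBeta ^ 2, 1; -1, 0], by simp [Matrix.det_fin_two_of]⟩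

namespace PP

abbrev SL2 := Matrix.SpecialLinearGroup (Fin 2) ℝ

noncomputable def tt : Fin 2 → ℝ :=
  ![5 + rootBeta ^ 2 + 3 * rootBeta + 2 * rootBeta ^ 3, 3 + 2 * rootBeta ^ 2]

noncomputable def gen (i : Fin 2) : SL2 :=
  ⟨!![tt i, 1; -1, 0], by simp [Matrix.det_fin_two_of]⟩

lemma beta_pos : 0 < rootBeta := Real.rpow_pos_of_pos (by norm_num) _

lemma beta_pow : rootBeta ^ 4 = 2 := by
  rw [rootBeta, ← Real.rpow_natCast ((2:ℝ) ^ ((1:ℝ)/4)) 4, ← Real.rpow_mul (by norm_num)]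
  norm_num

lemma beta_lb : 1.1892 ≤ rootBeta := by
  by_contra h
  push_neg at h
  have h2 : rootBeta ^ 4 ≤ 1.1892 ^ 4 := by
    apply pow_le_pow_left₀ beta_pos.le h.le
  rw [beta_pow] at h2
  norm_num at h2

lemma beta_ub : rootBeta ≤ 1.18921 := by
  by_contra h
  push_neg at h
  have h2 : (1.18921:ℝ) ^ 4 ≤ rootBeta ^ 4 := by
    apply pow_le_pow_left₀ (by norm_num) h.le
  rw [beta_pow] at h2
  norm_num at h2

lemma beta2_bnd : 1.4141 ≤ rootBeta ^ 2 ∧ rootBeta ^ 2 ≤ 1.4143 := by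
  have h1 := beta_lb; have h2 := beta_ub
  constructor <;> nlinarith

lemma beta3_bnd : 1.6816 ≤ rootBeta ^ 3 ∧ rootBeta ^ 3 ≤ 1.6819 := by
  have h1 := beta_lb; have h2 := beta_ub; have h3 := beta_pos
  have h4 := beta2_bnd
  constructor <;> nlinarith [mul_le_mul h4.2 h2 beta_pos.le (by norm_num : (0:ℝ) ≤ 1.4143),
    mul_le_mul h4.1 h1 (by norm_num) (sq_nonneg rootBeta)]

lemma t0_bnd : 13.34 ≤ tt 0 ∧ tt 0 ≤ 13.35 := by
  have h1 := beta_lb; have h2 := beta_ub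
  have h3 := beta2_bnd; have h4 := beta3_bnd
  simp only [tt, Matrix.cons_val_zero]
  constructor <;> linarith [h3.1, h3.2, h4.1, h4.2]

lemma t1_bnd : 5.82 ≤ tt 1 ∧ tt 1 ≤ 5.83 := by
  have h3 := beta2_bnd
  simp only [tt, Matrix.cons_val_one, Matrix.head_cons, Matrix.cons_val_zero]
  constructor <;> linarith [h3.1, h3.2]

lemma t_lb (i : Fin 2) : 5.82 ≤ tt i := by
  fin_cases i
  · exact le_trans (by norm_num) t0_bnd.1
  · exact t1_bnd.1

end PP

namespace PP

open Set

/-! ### Ping-pong sets -/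

def Wset : Set ℝ := {s | s ≤ -(1/2) ∨ (1/2:ℝ) ≤ s}

def Jset (i : Fin 2) : Set ℝ := if i = 0 then Icc (-0.19) (-0.06) else Icc (-0.18) 0.19

def XmSet (i : Fin 2) : Set ℝ :=
  if i = 0 then Icc (-0.077) (-0.074) else Icc (-0.1785) (-0.1655)

noncomputable def XpSet (i : Fin 2) : Set ℝ := Icc (-(tt i) - 2) (-(tt i) + 2)

noncomputable def Xset (l : Fin 2 × Bool) : Set ℝ := cond l.2 (XpSet l.1) (XmSet l.1)

noncomputable def Uset (l : Fin 2 × Bool) : Set ℝ := cond l.2 Wset (Jset l.1)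

/-- allowed previous slopes before applying letter `l` -/
noncomputable def Pre (l : Fin 2 × Bool) : Set ℝ :=
  {s | s = 1 ∨ ∃ l', l' ≠ (l.1, !l.2) ∧ s ∈ Xset l'}

/-! ### helpers for reciprocals -/

lemma one_div_mem_pos {A B s : ℝ} (hA : 0 < A) (h1 : A ≤ s) (h2 : s ≤ B) :
    1/B ≤ 1/s ∧ 1/s ≤ 1/A :=
  ⟨one_div_le_one_div_of_le (by linarith) h2, one_div_le_one_div_of_le hA h1⟩

lemma one_div_mem_neg {A B s : ℝ} (hB : B < 0) (h1 : A ≤ s) (h2 : s ≤ B) :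
    1/B ≤ 1/s ∧ 1/s ≤ 1/A := by
  have h := one_div_mem_pos (by linarith : (0:ℝ) < -B) (by linarith : -B ≤ -s)
    (by linarith : -s ≤ -A)
  rw [div_neg, div_neg, div_neg] at h
  exact ⟨by linarith [h.2], by linarith [h.1]⟩

lemma one_div_of_le_neg {B s : ℝ} (hB : B < 0) (h : s ≤ B) : 1/B ≤ 1/s ∧ 1/s < 0 :=
  ⟨(one_div_mem_neg hB le_rfl h).1, one_div_neg.2 (lt_of_le_of_lt h hB)⟩

lemma one_div_of_pos_le {B s : ℝ} (hB : 0 < B) (h : B ≤ s) : 0 < 1/s ∧ 1/s ≤ 1/B :=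
  ⟨one_div_pos.2 (lt_of_lt_of_le hB h), (one_div_mem_pos hB h le_rfl).2⟩

/-! ### real one-step lemmas -/

lemma fstepW (i : Fin 2) {s : ℝ} (hs : s ∈ Wset) :
    s ≠ 0 ∧ (-(tt i) - 1/s) ∈ XpSet i := by
  simp only [XpSet, mem_Icc]
  rcases hs with h | h
  · have h1 := one_div_of_le_neg (by norm_num : (-(1/2):ℝ) < 0) h
    have h2 : s⁻¹ < 0 := inv_lt_zero.2 (by linarith)
    norm_num [one_div] at h1 ⊢
    refine ⟨by intro h0; rw [h0] at h; norm_num at h, ?_, ?_⟩ <;> linarith [h1.1, h2]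
  · have h1 := one_div_of_pos_le (by norm_num : (0:ℝ) < 1/2) h
    have h2 : 0 < s⁻¹ := inv_pos.2 (by linarith)
    norm_num [one_div] at h1 ⊢
    refine ⟨by intro h0; rw [h0] at h; norm_num at h, ?_, ?_⟩ <;> linarith [h1.2, h2]

lemma XpW {s : ℝ} (j : Fin 2) (hs : s ∈ XpSet j) : s ∈ Wset := by
  have := t_lb j
  simp only [XpSet, mem_Icc] at hs
  exact Or.inl (by linarith [hs.2])

lemma oneW : (1:ℝ) ∈ Wset := Or.inr (by norm_num)

lemma fXm01 {s : ℝ} (hs : s ∈ XmSet 1) : s ≠ 0 ∧ (-(tt 0) - 1/s) ∈ Wset := by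
  simp only [XmSet, if_neg (by decide : ¬(1:Fin 2) = 0), mem_Icc] at hs
  have ht := t0_bnd
  have hb := one_div_mem_neg (by norm_num : (-0.1655:ℝ) < 0) hs.1 hs.2
  refine ⟨by intro h0; rw [h0] at hs; norm_num at hs, Or.inl ?_⟩
  norm_num [one_div] at hb ⊢
  linarith [hb.1, hb.2, ht.1, ht.2]

lemma fXm10 {s : ℝ} (hs : s ∈ XmSet 0) : s ≠ 0 ∧ (-(tt 1) - 1/s) ∈ Wset := by
  simp only [XmSet, if_pos rfl, mem_Icc] at hs
  have ht := t1_bnd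
  have hb := one_div_mem_neg (by norm_num : (-0.074:ℝ) < 0) hs.1 hs.2
  refine ⟨by intro h0; rw [h0] at hs; norm_num at hs, Or.inr ?_⟩
  norm_num [one_div] at hb ⊢
  linarith [hb.1, hb.2, ht.1, ht.2]

lemma gstepJ (i : Fin 2) {s : ℝ} (hs : s ∈ Jset i) :
    s ≠ -(tt i) ∧ (-(1/(s + tt i))) ∈ XmSet i := by
  fin_cases i
  · simp only [Jset, if_pos rfl, mem_Icc] at hs
    have ht := t0_bnd
    show s ≠ -(tt 0) ∧ (-(1/(s + tt 0))) ∈ XmSet 0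
    have hsum1 : (13.15:ℝ) ≤ s + tt 0 := by linarith [hs.1, ht.1]
    have hsum2 : s + tt 0 ≤ 13.29 := by linarith [hs.2, ht.2]
    have hb := one_div_mem_pos (by norm_num : (0:ℝ) < 13.15) hsum1 hsum2
    refine ⟨by intro h0; rw [h0] at hsum1; linarith [ht.2], ?_⟩
    simp only [XmSet, if_pos rfl, mem_Icc]
    norm_num [one_div] at hb ⊢
    constructor <;> linarith [hb.1, hb.2]
  · simp only [Jset, if_neg (by decide : ¬(1:Fin 2) = 0), mem_Icc] at hs
    have ht := t1_bnd
    show s ≠ -(tt 1) ∧ (-(1/(s + tt 1))) ∈ XmSet 1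
    have hsum1 : (5.64:ℝ) ≤ s + tt 1 := by linarith [hs.1, ht.1]
    have hsum2 : s + tt 1 ≤ 6.02 := by linarith [hs.2, ht.2]
    have hb := one_div_mem_pos (by norm_num : (0:ℝ) < 5.64) hsum1 hsum2
    refine ⟨by intro h0; rw [h0] at hsum1; linarith [ht.2], ?_⟩
    simp only [XmSet, if_neg (by decide : ¬(1:Fin 2) = 0), mem_Icc]
    norm_num [one_div] at hb ⊢
    constructor <;> linarith [hb.1, hb.2]

lemma gOne (i : Fin 2) : (1:ℝ) ≠ -(tt i) ∧ (-(1/((1:ℝ) + tt i))) ∈ Jset i := by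
  fin_cases i
  · have ht := t0_bnd
    show (1:ℝ) ≠ -(tt 0) ∧ (-(1/((1:ℝ) + tt 0))) ∈ Jset 0
    have hsum1 : (14.34:ℝ) ≤ 1 + tt 0 := by linarith [ht.1]
    have hsum2 : 1 + tt 0 ≤ 14.35 := by linarith [ht.2]
    have hb := one_div_mem_pos (by norm_num : (0:ℝ) < 14.34) hsum1 hsum2
    refine ⟨by intro h0; linarith [ht.1], ?_⟩
    simp only [Jset, if_pos rfl, mem_Icc]
    norm_num [one_div] at hb ⊢
    constructor <;> linarith [hb.1, hb.2]
  · have ht := t1_bnd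
    show (1:ℝ) ≠ -(tt 1) ∧ (-(1/((1:ℝ) + tt 1))) ∈ Jset 1
    have hsum1 : (6.82:ℝ) ≤ 1 + tt 1 := by linarith [ht.1]
    have hsum2 : 1 + tt 1 ≤ 6.83 := by linarith [ht.2]
    have hb := one_div_mem_pos (by norm_num : (0:ℝ) < 6.82) hsum1 hsum2
    refine ⟨by intro h0; linarith [ht.1], ?_⟩
    simp only [Jset, if_neg (by decide : ¬(1:Fin 2) = 0), mem_Icc]
    norm_num [one_div] at hb ⊢
    constructor <;> linarith [hb.1, hb.2]

lemma gXp01 {s : ℝ} (hs : s ∈ XpSet 1) : s ≠ -(tt 0) ∧ (-(1/(s + tt 0))) ∈ Jset 0 := by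
  simp only [XpSet, mem_Icc] at hs
  have ht := t0_bnd; have ht1 := t1_bnd
  have hsum1 : (5.51:ℝ) ≤ s + tt 0 := by linarith [hs.1, ht.1, ht1.2]
  have hsum2 : s + tt 0 ≤ 9.53 := by linarith [hs.2, ht.2, ht1.1]
  have hb := one_div_mem_pos (by norm_num : (0:ℝ) < 5.51) hsum1 hsum2
  refine ⟨by intro h0; rw [h0] at hsum1; linarith, ?_⟩
  simp only [Jset, if_pos rfl, mem_Icc]
  norm_num [one_div] at hb ⊢
  constructor <;> linarith [hb.1, hb.2]

lemma gXp10 {s : ℝ} (hs : s ∈ XpSet 0) : s ≠ -(tt 1) ∧ (-(1/(s + tt 1))) ∈ Jset 1 := by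
  simp only [XpSet, mem_Icc] at hs
  have ht := t0_bnd; have ht1 := t1_bnd
  have hsum1 : (-9.53:ℝ) ≤ s + tt 1 := by linarith [hs.1, ht.1, ht1.1]
  have hsum2 : s + tt 1 ≤ -5.51 := by linarith [hs.2, ht.2, ht1.2]
  have hb := one_div_mem_neg (by norm_num : (-5.51:ℝ) < 0) hsum1 hsum2
  refine ⟨by intro h0; rw [h0] at hsum2; linarith, ?_⟩
  simp only [Jset, if_neg (by decide : ¬(1:Fin 2) = 0), mem_Icc]
  norm_num [one_div] at hb ⊢
  constructor <;> linarith [hb.1, hb.2]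

lemma XmJ (i j : Fin 2) {s : ℝ} (hs : s ∈ XmSet j) : s ∈ Jset i := by
  fin_cases i <;> fin_cases j <;>
    simp only [XmSet, Jset, if_pos rfl, if_neg (by decide : ¬(1:Fin 2) = 0), mem_Icc]
      at hs ⊢ <;> constructor <;> linarith [hs.1, hs.2]

lemma one_notin_Xset (l : Fin 2 × Bool) : (1:ℝ) ∉ Xset l := by
  obtain ⟨i, b⟩ := l
  cases b
  · intro h
    fin_cases i <;>
      simp only [Xset, XmSet, cond, if_pos rfl, if_neg (by decide : ¬(1:Fin 2) = 0),
        mem_Icc] at h <;> linarith [h.2]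
  · intro h
    have := t_lb i
    simp only [Xset, XpSet, cond, mem_Icc] at h
    linarith [h.2]

end PP

namespace PP

open Set Matrix

def GoodV (S : Set ℝ) (v : Fin 2 → ℝ) : Prop := v 1 ≠ 0 ∧ v 0 / v 1 ∈ S

lemma GoodV.mono {S T : Set ℝ} (h : S ⊆ T) {v} (hv : GoodV S v) : GoodV T v :=
  ⟨hv.1, h hv.2⟩

lemma gen_mulVec (i : Fin 2) (v : Fin 2 → ℝ) :
    ((gen i : SL2) : Matrix (Fin 2) (Fin 2) ℝ).mulVec v = ![tt i * v 0 + v 1, -(v 0)] := by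
  funext k
  fin_cases k <;>
    simp [gen, Matrix.mulVec, dotProduct, Fin.sum_univ_two] <;> ring

lemma gen_inv_coe (i : Fin 2) :
    (((gen i)⁻¹ : SL2) : Matrix (Fin 2) (Fin 2) ℝ) = !![0, -1; 1, tt i] := by
  rw [Matrix.SpecialLinearGroup.SL2_inv_expl]
  ext k l
  fin_cases k <;> fin_cases l <;> simp [gen]

lemma gen_inv_mulVec (i : Fin 2) (v : Fin 2 → ℝ) :
    (((gen i)⁻¹ : SL2) : Matrix (Fin 2) (Fin 2) ℝ).mulVec v = ![-(v 1), v 0 + tt i * v 1] := by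
  rw [gen_inv_coe]
  funext k
  fin_cases k <;>
    simp [Matrix.mulVec, dotProduct, Fin.sum_univ_two] <;> ring

/-- slope transfer for `gen i` -/
lemma goodV_f (i : Fin 2) {S T : Set ℝ}
    (h : ∀ s ∈ S, s ≠ 0 ∧ (-(tt i) - 1/s) ∈ T) {v : Fin 2 → ℝ}
    (hv : GoodV S v) : GoodV T (((gen i : SL2) : Matrix (Fin 2) (Fin 2) ℝ).mulVec v) := by
  obtain ⟨hv1, hvS⟩ := hv
  obtain ⟨hs0, hsT⟩ := h _ hvS
  have hv0 : v 0 ≠ 0 := fun h0 => hs0 (by rw [h0]; simp)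
  rw [gen_mulVec]
  refine ⟨by simpa using hv0, ?_⟩
  have heq : (tt i * v 0 + v 1) / (-(v 0)) = -(tt i) - 1/(v 0 / v 1) := by
    rw [one_div_div, div_neg, add_div, mul_div_assoc, div_self hv0, mul_one]
    ring
  simpa [heq] using hsT

/-- slope transfer for `(gen i)⁻¹` -/
lemma goodV_g (i : Fin 2) {S T : Set ℝ}
    (h : ∀ s ∈ S, s ≠ -(tt i) ∧ (-(1/(s + tt i))) ∈ T) {v : Fin 2 → ℝ}
    (hv : GoodV S v) : GoodV T ((((gen i)⁻¹ : SL2) : Matrix (Fin 2) (Fin 2) ℝ).mulVec v) := by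
  obtain ⟨hv1, hvS⟩ := hv
  obtain ⟨hs0, hsT⟩ := h _ hvS
  have hden : v 0 + tt i * v 1 ≠ 0 := by
    intro h0
    apply hs0
    field_simp
    linarith [mul_comm (tt i) (v 1)]
  rw [gen_inv_mulVec]
  refine ⟨by simpa using hden, ?_⟩
  have hsum : v 0 / v 1 + tt i ≠ 0 := by
    intro H
    exact hs0 (by linarith)
  have heq : (-(v 1)) / (v 0 + tt i * v 1) = -(1/(v 0 / v 1 + tt i)) := by
    field_simp
  simpa [heq] using hsT

end PP

namespace PP

open Set Matrix

noncomputable def bmat (l : Fin 2 × Bool) : SL2 := cond l.2 (gen l.1) (gen l.1)⁻¹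

/-- iteration lemma: one step into the buffer `U`, then trapped in `X`. -/
lemma iterate_good (g : SL2) (S U X : Set ℝ) (hXU : X ⊆ U)
    (hU : ∀ v, GoodV U v → GoodV X ((g : Matrix (Fin 2) (Fin 2) ℝ).mulVec v))
    (hS : ∀ v, GoodV S v → GoodV U ((g : Matrix (Fin 2) (Fin 2) ℝ).mulVec v)) :
    ∀ m, 2 ≤ m → ∀ v, GoodV S v →
      GoodV X (((g ^ m : SL2) : Matrix (Fin 2) (Fin 2) ℝ).mulVec v) := by
  have key : ∀ k (v : Fin 2 → ℝ), GoodV U v →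
      GoodV X (((g ^ (k+1) : SL2) : Matrix (Fin 2) (Fin 2) ℝ).mulVec v) := by
    intro k
    induction k with
    | zero => intro v hv; rw [pow_one]; exact hU v hv
    | succ n ih =>
      intro v hv
      have hstep : ((g ^ (n+2) : SL2) : Matrix (Fin 2) (Fin 2) ℝ).mulVec v =
          ((g ^ (n+1) : SL2) : Matrix (Fin 2) (Fin 2) ℝ).mulVec
            ((g : Matrix (Fin 2) (Fin 2) ℝ).mulVec v) := by
        rw [Matrix.mulVec_mulVec, ← Matrix.SpecialLinearGroup.coe_mul, ← pow_succ]
      rw [hstep]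
      exact ih _ ((hU v hv).mono hXU)
  intro m hm v hv
  obtain ⟨k, rfl⟩ : ∃ k, m = (k + 1) + 1 := ⟨m - 2, by omega⟩
  have hstep : ((g ^ (k+1+1) : SL2) : Matrix (Fin 2) (Fin 2) ℝ).mulVec v =
      ((g ^ (k+1) : SL2) : Matrix (Fin 2) (Fin 2) ℝ).mulVec
        ((g : Matrix (Fin 2) (Fin 2) ℝ).mulVec v) := by
    rw [Matrix.mulVec_mulVec, ← Matrix.SpecialLinearGroup.coe_mul, ← pow_succ]
  rw [hstep]
  exact key k _ (hS v hv)

lemma pre_f (i : Fin 2) : ∀ s ∈ Pre (i, true), s ≠ 0 ∧ (-(tt i) - 1/s) ∈ Wset := by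
  rintro s (rfl | ⟨⟨j, b⟩, hne, hmem⟩)
  · have h := fstepW i oneW
    exact ⟨h.1, XpW i h.2⟩
  · cases b
    · -- s ∈ XmSet j, with (j, false) ≠ (i, false), so j ≠ i
      have hji : j ≠ i := fun h => hne (by simp [h])
      fin_cases i <;> fin_cases j
      · exact absurd rfl hji
      · exact fXm01 hmem
      · exact fXm10 hmem
      · exact absurd rfl hji
    · have h := fstepW i (XpW j hmem)
      exact ⟨h.1, XpW i h.2⟩

lemma pre_g (i : Fin 2) : ∀ s ∈ Pre (i, false), s ≠ -(tt i) ∧ (-(1/(s + tt i))) ∈ Jset i := by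
  rintro s (rfl | ⟨⟨j, b⟩, hne, hmem⟩)
  · exact gOne i
  · cases b
    · -- s ∈ XmSet j (any j) : already in J i, one more step stays
      have hsJ : s ∈ Jset i := XmJ i j hmem
      have h := gstepJ i hsJ
      exact ⟨h.1, XmJ i i h.2⟩
    · -- s ∈ XpSet j with (j,true) ≠ (i, true), so j ≠ i
      have hji : j ≠ i := fun h => hne (by simp [h])
      fin_cases i <;> fin_cases j
      · exact absurd rfl hji
      · exact gXp01 hmem
      · exact gXp10 hmem
      · exact absurd rfl hji

lemma letter_step (l : Fin 2 × Bool) (m : ℕ) (hm : 2 ≤ m) {v : Fin 2 → ℝ}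
    (hv : GoodV (Pre l) v) :
    GoodV (Xset l) (((bmat l ^ m : SL2) : Matrix (Fin 2) (Fin 2) ℝ).mulVec v) := by
  obtain ⟨i, b⟩ := l
  cases b
  · -- negative letter : g = (gen i)⁻¹, U = Jset i, X = XmSet i
    refine iterate_good ((gen i)⁻¹) (Pre (i, false)) (Jset i) (XmSet i)
      (fun s hs => XmJ i i hs) ?_ ?_ m hm v hv
    · intro w hw
      exact goodV_g i (fun s hs => gstepJ i hs) hw
    · intro w hw
      exact goodV_g i (pre_g i) hw
  · refine iterate_good (gen i) (Pre (i, true)) Wset (XpSet i)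
      (fun s hs => XpW i hs) ?_ ?_ m hm v hv
    · intro w hw
      exact goodV_f i (fun s hs => fstepW i hs) hw
    · intro w hw
      exact goodV_f i (pre_f i) hw

end PP

namespace PP

open Matrix

noncomputable def wmat (N : ℕ) (l : Fin 2 × Bool) : SL2 :=
  cond l.2 (gen l.1 ^ N) (gen l.1 ^ N)⁻¹

noncomputable def prodW (N : ℕ) (L : List (Fin 2 × Bool)) : SL2 := (L.map (wmat N)).prod

lemma wmat_eq (N : ℕ) (l : Fin 2 × Bool) : wmat N l = bmat l ^ N := by
  obtain ⟨i, b⟩ := l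
  cases b
  · simp [wmat, bmat, inv_pow]
  · rfl

/-- no cancelling adjacent pair -/
def NoInv (L : List (Fin 2 × Bool)) : Prop :=
  ∀ (L₂ : List (Fin 2 × Bool)) (x : Fin 2) (b : Bool) (L₃ : List (Fin 2 × Bool)),
    L ≠ L₂ ++ (x, b) :: (x, !b) :: L₃

lemma noInv_toWord (x : FreeGroup (Fin 2)) : NoInv x.toWord := by
  intro L₂ y b L₃ h
  have h2 : FreeGroup.reduce x.toWord = L₂ ++ (y, b) :: (y, !b) :: L₃ := by
    rw [FreeGroup.reduce_toWord]
    exact h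
  exact FreeGroup.reduce.not h2

lemma noInv_tail {a : Fin 2 × Bool} {L : List (Fin 2 × Bool)} (h : NoInv (a :: L)) :
    NoInv L := by
  intro L₂ y b L₃ hL
  exact h (a :: L₂) y b L₃ (by rw [hL]; rfl)

lemma noInv_head {a a' : Fin 2 × Bool} {L : List (Fin 2 × Bool)}
    (h : NoInv (a :: a' :: L)) : a' ≠ (a.1, !a.2) := by
  intro hEq
  exact h [] a.1 a.2 L (by rw [← hEq, Prod.mk.eta]; rfl)

lemma word_good (N : ℕ) (hN : 2 ≤ N) :
    ∀ L : List (Fin 2 × Bool), NoInv L → ∀ l rest, L = l :: rest →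
      GoodV (Xset l) (((prodW N L : SL2) : Matrix (Fin 2) (Fin 2) ℝ).mulVec ![1, 1]) := by
  intro L
  induction L with
  | nil => intro _ l rest h; exact absurd h (by simp)
  | cons a L ih =>
    intro hNoInv l rest heq
    injection heq with h1 h2
    subst h1; subst h2
    have hsplit : ((prodW N (a :: L) : SL2) : Matrix (Fin 2) (Fin 2) ℝ).mulVec ![1, 1] =
        ((wmat N a : SL2) : Matrix (Fin 2) (Fin 2) ℝ).mulVec
          (((prodW N L : SL2) : Matrix (Fin 2) (Fin 2) ℝ).mulVec ![1, 1]) := by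
      rw [Matrix.mulVec_mulVec, ← Matrix.SpecialLinearGroup.coe_mul]
      rfl
    rw [hsplit, wmat_eq]
    apply letter_step a N hN
    rcases L with _ | ⟨a', rest'⟩
    · have hone : prodW N ([] : List (Fin 2 × Bool)) = 1 := rfl
      rw [hone, Matrix.SpecialLinearGroup.coe_one, Matrix.one_mulVec]
      refine ⟨by norm_num, ?_⟩
      simp only [Matrix.cons_val_zero, Matrix.cons_val_one, Matrix.head_cons]
      exact Or.inl (by norm_num)
    · have hgood := ih (noInv_tail hNoInv) a' rest' rfl
      exact ⟨hgood.1, Or.inr ⟨a', noInv_head hNoInv, hgood.2⟩⟩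

theorem pingpong (N : ℕ) (hN : 2 ≤ N) :
    Function.Injective
      (FreeGroup.lift ![gen 0 ^ N, gen 1 ^ N] : FreeGroup (Fin 2) →* SL2) := by
  rw [injective_iff_map_eq_one]
  intro x hx
  by_contra hne
  obtain ⟨l, rest, heq⟩ : ∃ l rest, x.toWord = l :: rest := by
    cases h : x.toWord with
    | nil => exact absurd (FreeGroup.toWord_eq_nil_iff.mp h) hne
    | cons a L => exact ⟨a, L, rfl⟩
  have hlift : FreeGroup.lift ![gen 0 ^ N, gen 1 ^ N] x = prodW N x.toWord := by
    conv_lhs => rw [← FreeGroup.mk_toWord (x := x)]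
    rw [FreeGroup.lift_mk]
    unfold prodW
    congr 1
    apply List.map_congr_left
    rintro ⟨i, b⟩ _
    fin_cases i <;> cases b <;> rfl
  rw [hlift] at hx
  have hgood := word_good N hN x.toWord (noInv_toWord x) l rest heq
  rw [hx] at hgood
  rw [Matrix.SpecialLinearGroup.coe_one, Matrix.one_mulVec] at hgood
  have h1 : (1:ℝ) ∈ Xset l := by
    have := hgood.2
    norm_num at this
    exact this
  exact one_notin_Xset l h1

end PP

namespace PP

open Polynomial

/-- linear independence of `1, x, x², x³` for any real `x` with `x⁴ = 2`. -/
lemma linIndep {x : ℝ} (hx : x ^ 4 = 2) (a b c d : ℚ)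
    (h : (a:ℝ) + b * x + c * x^2 + d * x^3 = 0) : a = 0 ∧ b = 0 ∧ c = 0 ∧ d = 0 := by
  have hx0 : x ≠ 0 := by intro h0; rw [h0] at hx; norm_num at hx
  set s : ℝ := x ^ 2 with hs
  have hs2 : s ^ 2 = 2 := by rw [hs, ← pow_mul]; exact hx
  have hspos : 0 < s := by positivity
  have hsirr : Irrational s := by
    have : s = Real.sqrt 2 := by
      rw [show (2:ℝ) = s ^ 2 from hs2.symm, Real.sqrt_sq hspos.le]
    rw [this]
    exact irrational_sqrt_two
  have ratrel : ∀ p q : ℚ, (q:ℝ) * s = (p:ℝ) → q = 0 ∧ p = 0 := by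
    intro p q hpq
    by_cases hq : q = 0
    · refine ⟨hq, ?_⟩
      rw [hq] at hpq
      push_cast at hpq
      have : (p:ℝ) = 0 := by linarith [hpq]
      exact_mod_cast this
    · exfalso
      apply hsirr
      refine ⟨p / q, ?_⟩
      push_cast
      rw [div_eq_iff (by exact_mod_cast hq : (q:ℝ) ≠ 0)]
      linarith [hpq]
  -- h : (a + c s) + x (b + d s) = 0
  by_cases hw : (b:ℝ) + d * s = 0
  · obtain ⟨hd, hb⟩ := ratrel (-b) d (by push_cast; linarith [hw])
    have hb' : b = 0 := by simpa using hb
    have hax : (a:ℝ) + c * s = 0 := by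
      have : (b:ℝ) * x + d * x^3 = x * ((b:ℝ) + d * s) := by rw [hs]; ring
      rw [hw, mul_zero] at this
      nlinarith [h, this]
    obtain ⟨hc, ha⟩ := ratrel (-a) c (by push_cast; linarith [hax])
    exact ⟨by simpa using ha, hb', hc, hd⟩
  · exfalso
    -- x = -(a + c s)/(b + d s), and s = x²
    have hxval : x * ((b:ℝ) + d * s) = -((a:ℝ) + c * s) := by
      have hx3 : x ^ 3 = x * s := by rw [hs]; ring
      rw [hx3] at h
      linear_combination h
    have hsq : s * ((b:ℝ) + d*s)^2 = ((a:ℝ) + c*s)^2 := by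
      have h1 : (x * ((b:ℝ) + d * s))^2 = ((a:ℝ) + c * s)^2 := by rw [hxval]; ring
      calc s * ((b:ℝ) + d*s)^2 = (x * ((b:ℝ) + d * s))^2 := by rw [hs]; ring
        _ = ((a:ℝ) + c*s)^2 := h1
    -- expand with s² = 2:
    have key : s * ((b:ℝ)^2 + 2*d^2 - 2*a*c) = (a:ℝ)^2 + 2*c^2 - 4*b*d := by
      linear_combination hsq + ((c:ℝ)^2 - 2*(b:ℝ)*(d:ℝ) - (d:ℝ)^2*s) * hs2
    have hE : ((b:ℝ)^2 + 2*d^2 - 2*a*c) = 0 ∧ ((a:ℝ)^2 + 2*c^2 - 4*b*d) = 0 := by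
      have := ratrel (a^2 + 2*c^2 - 4*b*d) (b^2 + 2*d^2 - 2*a*c) (by push_cast; linarith [key])
      constructor
      · exact_mod_cast this.1
      · exact_mod_cast this.2
    -- now the inequality chain forces b² + 2d² = 0
    have hs3 : s ^ 3 = 2 * s := by rw [pow_succ, hs2]
    have hE1s : s * ((b:ℝ)^2 + 2*d^2 - 2*a*c) = 0 := by rw [hE.1]; ring
    have hineq1 : (a:ℝ)^2 + 2*c^2 ≥ s * ((b:ℝ)^2 + 2*d^2) := by
      nlinarith [sq_nonneg ((a:ℝ) - s*c), hs2, hE1s, sq_nonneg (c:ℝ)]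
    have hineq2 : s * ((b:ℝ)^2 + 2*d^2) ≥ 4*(b:ℝ)*d := by
      nlinarith [mul_nonneg hspos.le (sq_nonneg ((b:ℝ) - s*d)), hs2, hs3]
    have heqchain : s * ((b:ℝ)^2 + 2*d^2) = 4*(b:ℝ)*d := by linarith [hineq1, hineq2, hE.2]
    have hbd := ratrel (4*b*d) (b^2 + 2*d^2) (by push_cast; linarith [heqchain])
    have h20 : (b:ℚ)^2 + 2*d^2 = 0 := hbd.1
    have hbq : b = 0 := by
      have : b^2 = 0 := by nlinarith [sq_nonneg b, sq_nonneg d]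
      exact pow_eq_zero_iff (by norm_num : (2:ℕ) ≠ 0) |>.mp this
    have hdq : d = 0 := by
      have : d^2 = 0 := by nlinarith [sq_nonneg b, sq_nonneg d]
      exact pow_eq_zero_iff (by norm_num : (2:ℕ) ≠ 0) |>.mp this
    apply hw
    rw [hbq, hdq]
    push_cast
    ring

end PP

namespace PP

open Polynomial

noncomputable def qpoly : ℚ[X] := X ^ 4 - C 2

noncomputable abbrev Aring := AdjoinRoot qpoly

lemma qpoly_monic : qpoly.Monic := Polynomial.monic_X_pow_sub_C _ (by norm_num)

lemma qpoly_degree : qpoly.degree = 4 := Polynomial.degree_X_pow_sub_C (by norm_num) 2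

lemma qpoly_eval₂ {x : ℝ} (hx : x ^ 4 = 2) :
    qpoly.eval₂ (algebraMap ℚ ℝ) x = 0 := by
  simp [qpoly, hx]

/-- The evaluation map `ℚ[X]/(X⁴-2) → ℝ` at a real root `x` of `X⁴-2` is injective. -/
lemma ev_injective {x : ℝ} (hx : x ^ 4 = 2) :
    Function.Injective (AdjoinRoot.lift (algebraMap ℚ ℝ) x (qpoly_eval₂ hx)) := by
  rw [injective_iff_map_eq_zero]
  intro aa haa
  obtain ⟨p, rfl⟩ := AdjoinRoot.mk_surjective aa
  rw [AdjoinRoot.lift_mk] at haa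
  set r := p %ₘ qpoly with hr
  have hdiv : p %ₘ qpoly + qpoly * (p /ₘ qpoly) = p := p.modByMonic_add_div qpoly
  have heval : r.eval₂ (algebraMap ℚ ℝ) x = 0 := by
    have := congrArg (Polynomial.eval₂ (algebraMap ℚ ℝ) x) hdiv
    rw [eval₂_add, eval₂_mul, qpoly_eval₂ hx, zero_mul, add_zero] at this
    rw [this, haa]
  have hr0 : r = 0 := by
    by_cases hrz : r = 0
    · exact hrz
    have hdeg : r.natDegree < 4 := by
      rw [Polynomial.natDegree_lt_iff_degree_lt hrz]
      exact lt_of_lt_of_eq (Polynomial.degree_modByMonic_lt p qpoly_monic) qpoly_degree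
    rw [Polynomial.eval₂_eq_sum_range' (algebraMap ℚ ℝ) hdeg x] at heval
    simp only [Finset.sum_range_succ, Finset.sum_range_zero, zero_add, pow_zero, pow_one,
      mul_one, eq_ratCast] at heval
    have hli := linIndep hx (r.coeff 0) (r.coeff 1) (r.coeff 2) (r.coeff 3)
      (by linarith [heval])
    ext n
    simp only [Polynomial.coeff_zero]
    by_cases hn : n < 4
    · interval_cases n
      · exact hli.1
      · exact hli.2.1
      · exact hli.2.2.1
      · exact hli.2.2.2
    · exact Polynomial.coeff_eq_zero_of_natDegree_lt (lt_of_lt_of_le hdeg (not_lt.mp hn))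
  rw [AdjoinRoot.mk_eq_zero]
  have hr0' : p %ₘ qpoly = 0 := by rw [← hr]; exact hr0
  exact ⟨p /ₘ qpoly, by conv_lhs => rw [← hdiv, hr0', zero_add]⟩

end PP

namespace PP

open Polynomial Matrix

noncomputable def rootA : Aring := AdjoinRoot.root qpoly

lemma rootA_pow : rootA ^ 4 = 2 := by
  have h : (aeval rootA) qpoly = 0 := by
    rw [rootA, AdjoinRoot.aeval_eq, AdjoinRoot.mk_self]
  simp only [qpoly, map_sub, map_pow, aeval_X, aeval_C] at h
  have h2 : algebraMap ℚ Aring 2 = 2 := map_ofNat _ 2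
  rw [h2] at h
  linear_combination h

noncomputable def PA : Matrix.SpecialLinearGroup (Fin 2) Aring :=
  ⟨!![5 + rootA ^ 2 - 3 * rootA - 2 * rootA ^ 3, 1; -1, 0], by
    simp [Matrix.det_fin_two_of]⟩

noncomputable def QA : Matrix.SpecialLinearGroup (Fin 2) Aring :=
  ⟨!![3 + 2 * rootA ^ 2, 1; -1, 0], by simp [Matrix.det_fin_two_of]⟩

noncomputable def evB : Aring →+* ℝ :=
  AdjoinRoot.lift (algebraMap ℚ ℝ) rootBeta (qpoly_eval₂ beta_pow)

lemma negBeta_pow : (-rootBeta) ^ 4 = 2 := by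
  rw [show (-rootBeta) ^ 4 = rootBeta ^ 4 by ring]; exact beta_pow

noncomputable def evM : Aring →+* ℝ :=
  AdjoinRoot.lift (algebraMap ℚ ℝ) (-rootBeta) (qpoly_eval₂ negBeta_pow)

lemma evB_root : evB rootA = rootBeta := AdjoinRoot.lift_root _
lemma evM_root : evM rootA = -rootBeta := AdjoinRoot.lift_root _

lemma evB_inj : Function.Injective evB := ev_injective beta_pow
lemma evM_inj : Function.Injective evM := ev_injective negBeta_pow

/-- injectivity of the induced map on `SL₂`. -/
lemma mapSL_inj {f : Aring →+* ℝ} (hf : Function.Injective f) :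
    Function.Injective (Matrix.SpecialLinearGroup.map (n := Fin 2) f) := by
  intro g h hgh
  ext i j
  apply hf
  have := congrArg (fun M : Matrix.SpecialLinearGroup (Fin 2) ℝ => (M : Matrix (Fin 2) (Fin 2) ℝ) i j) hgh
  simpa [Matrix.SpecialLinearGroup.map_apply_coe, RingHom.mapMatrix_apply,
    Matrix.map_apply] using this

lemma evB_PA : Matrix.SpecialLinearGroup.map evB PA = matP := by
  ext i j
  simp only [Matrix.SpecialLinearGroup.map_apply_coe, RingHom.mapMatrix_apply, Matrix.map_apply]
  fin_cases i <;> fin_cases j <;>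
    simp [Matrix.SpecialLinearGroup.map_apply_coe, RingHom.mapMatrix_apply, Matrix.map_apply,
      PA, matP, _root_.map_sub, _root_.map_add, _root_.map_mul, _root_.map_pow, _root_.map_ofNat, evB_root, _root_.map_one, _root_.map_neg,
      _root_.map_zero]

lemma evB_QA : Matrix.SpecialLinearGroup.map evB QA = matQ := by
  ext i j
  simp only [Matrix.SpecialLinearGroup.map_apply_coe, RingHom.mapMatrix_apply, Matrix.map_apply]
  fin_cases i <;> fin_cases j <;>
    simp [Matrix.SpecialLinearGroup.map_apply_coe, RingHom.mapMatrix_apply, Matrix.map_apply,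
      QA, matQ, _root_.map_sub, _root_.map_add, _root_.map_mul, _root_.map_pow, _root_.map_ofNat, evB_root, _root_.map_one, _root_.map_neg,
      _root_.map_zero]

lemma evM_PA : Matrix.SpecialLinearGroup.map evM PA = gen 0 := by
  ext i j
  simp only [Matrix.SpecialLinearGroup.map_apply_coe, RingHom.mapMatrix_apply, Matrix.map_apply]
  fin_cases i <;> fin_cases j <;>
    simp [Matrix.SpecialLinearGroup.map_apply_coe, RingHom.mapMatrix_apply, Matrix.map_apply,
      PA, gen, tt, _root_.map_sub, _root_.map_add, _root_.map_mul, _root_.map_pow, _root_.map_ofNat, evM_root, _root_.map_one, _root_.map_neg,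
      _root_.map_zero] <;> ring

lemma evM_QA : Matrix.SpecialLinearGroup.map evM QA = gen 1 := by
  ext i j
  simp only [Matrix.SpecialLinearGroup.map_apply_coe, RingHom.mapMatrix_apply, Matrix.map_apply]
  fin_cases i <;> fin_cases j <;>
    simp [Matrix.SpecialLinearGroup.map_apply_coe, RingHom.mapMatrix_apply, Matrix.map_apply,
      QA, gen, tt, _root_.map_sub, _root_.map_add, _root_.map_mul, _root_.map_pow, _root_.map_ofNat, evM_root, _root_.map_one, _root_.map_neg,
      _root_.map_zero] <;> ring

lemma comp_evM (N : ℕ) :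
    (Matrix.SpecialLinearGroup.map (n := Fin 2) evM).comp
        (FreeGroup.lift ![PA ^ N, QA ^ N]) =
      FreeGroup.lift ![gen 0 ^ N, gen 1 ^ N] := by
  apply FreeGroup.ext_hom
  intro a
  fin_cases a <;>
    simp [FreeGroup.lift_apply_of, map_pow, evM_PA, evM_QA]

lemma comp_evB (N : ℕ) :
    (Matrix.SpecialLinearGroup.map (n := Fin 2) evB).comp
        (FreeGroup.lift ![PA ^ N, QA ^ N]) =
      FreeGroup.lift ![matP ^ N, matQ ^ N] := by
  apply FreeGroup.ext_hom
  intro a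
  fin_cases a <;>
    simp [FreeGroup.lift_apply_of, map_pow, evB_PA, evB_QA]

end PP


/-- For all sufficiently large `N`, the matrices `P^N` and `Q^N` freely generate a free
subgroup of rank two of `SL(2,ℝ)`. -/
theorem stmt8 :
    ∃ N₀ : ℕ, 1 ≤ N₀ ∧ ∀ N : ℕ, N₀ ≤ N →
      Function.Injective
        (FreeGroup.lift ![matP ^ N, matQ ^ N] :
          FreeGroup (Fin 2) →* Matrix.SpecialLinearGroup (Fin 2) ℝ) := by
  refine ⟨2, by norm_num, ?_⟩
  intro N hN
  have hA : Function.Injective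
      (FreeGroup.lift ![PP.PA ^ N, PP.QA ^ N] :
        FreeGroup (Fin 2) →* Matrix.SpecialLinearGroup (Fin 2) PP.Aring) := by
    have h := PP.pingpong N hN
    rw [← PP.comp_evM N] at h
    rw [MonoidHom.coe_comp] at h
    exact h.of_comp
  have hres : (FreeGroup.lift ![matP ^ N, matQ ^ N] :
      FreeGroup (Fin 2) →* Matrix.SpecialLinearGroup (Fin 2) ℝ) =
      (Matrix.SpecialLinearGroup.map (n := Fin 2) PP.evB).comp
        (FreeGroup.lift ![PP.PA ^ N, PP.QA ^ N]) := (PP.comp_evB N).symm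
  rw [hres, MonoidHom.coe_comp]
  exact (PP.mapSL_inj PP.evB_inj).comp hA
end

section
/- Let σ : ℤ[√2] → ℤ[√2] be the ring automorphism determined by m + n√2 ↦ m − n√2 (m, n ∈ ℤ). Then the set of pairs (A, σ(A)), where A ranges over SL(2, ℤ[√2]) and σ is applied entrywise (with both coordinates regarded as matrices in SL(2,ℝ) via ℤ[√2] ⊂ ℝ), is a discrete subgroup of SL(2,ℝ) × SL(2,ℝ): its subspace topology is discrete. -/
/-- The standard topology on the special linear group, as a subspace of the
space of matrices. -/
noncomputable instance (n : ℕ) (R : Type*) [CommRing R] [TopologicalSpace R] :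
    TopologicalSpace (Matrix.SpecialLinearGroup (Fin n) R) :=
  instTopologicalSpaceSubtype

/-- The embedding `ℤ[√2] → ℝ`, realizing `ℤ[√2]` as `ℤ√2 = Zsqrtd 2`. -/
noncomputable def zsqrt2ToReal : ℤ√2 →+* ℝ := Zsqrtd.toReal (by norm_num)

lemma two_nonsquare : ∀ n : ℤ, (2:ℤ) ≠ n * n := by
  intro n h
  have h2 : (↑(n.natAbs * n.natAbs) : ℤ) = n * n := Int.natAbs_mul_self
  rcases Nat.lt_or_ge n.natAbs 2 with hl | hl
  · have : n.natAbs * n.natAbs ≤ 1 * 1 := Nat.mul_le_mul (by omega) (by omega)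
    omega
  · have : 2 * 2 ≤ n.natAbs * n.natAbs := Nat.mul_le_mul hl hl
    omega

lemma key (σ : ℤ√2 →+* ℤ√2) (hσ : ∀ m n : ℤ, σ ⟨m, n⟩ = ⟨m, -n⟩)
    (z : ℤ√2) (hz : z ≠ 0) :
    (1:ℝ) ≤ |zsqrt2ToReal z| ∨ (1:ℝ) ≤ |zsqrt2ToReal (σ z)| := by
  have h1 : σ z = ⟨z.re, -z.im⟩ := hσ z.re z.im
  have hs : Real.sqrt 2 * Real.sqrt 2 = 2 := Real.mul_self_sqrt (by norm_num)
  have hprod : zsqrt2ToReal z * zsqrt2ToReal (σ z) = (z.norm : ℝ) := by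
    rw [h1]
    simp only [zsqrt2ToReal, Zsqrtd.toReal_apply, Zsqrtd.norm_def]
    push_cast
    linear_combination (-((z.im : ℝ) * (z.im : ℝ))) * hs
  have hn : z.norm ≠ 0 := fun h => hz ((Zsqrtd.norm_eq_zero two_nonsquare z).mp h)
  have h2 : (1:ℝ) ≤ |(z.norm : ℝ)| := by
    have := Int.one_le_abs hn
    exact_mod_cast Int.cast_le.mpr this
  by_contra h
  push_neg at h
  obtain ⟨ha, hb⟩ := h
  have : |zsqrt2ToReal z * zsqrt2ToReal (σ z)| < 1 := by
    rw [abs_mul]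
    nlinarith [abs_nonneg (zsqrt2ToReal z), abs_nonneg (zsqrt2ToReal (σ z))]
  rw [hprod] at this
  linarith


/-- If `σ : ℤ[√2] → ℤ[√2]` is the ring automorphism `m + n√2 ↦ m − n√2`, then the set of
pairs `(A, σ(A))` with `A ∈ SL(2,ℤ[√2])` (both coordinates regarded as elements of
`SL(2,ℝ)`) is a discrete subgroup of `SL(2,ℝ) × SL(2,ℝ)`. -/
theorem stmt13 (σ : ℤ√2 →+* ℤ√2) (hσ : ∀ m n : ℤ, σ ⟨m, n⟩ = ⟨m, -n⟩) :
    DiscreteTopology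
      (((Matrix.SpecialLinearGroup.map (n := Fin 2) zsqrt2ToReal).prod
        (Matrix.SpecialLinearGroup.map (n := Fin 2) (zsqrt2ToReal.comp σ))).range :
        Subgroup (Matrix.SpecialLinearGroup (Fin 2) ℝ ×
          Matrix.SpecialLinearGroup (Fin 2) ℝ)) := by
  rw [discreteTopology_iff_isOpen_singleton]
  intro x
  obtain ⟨A, hA⟩ := x.2
  set U : Set (Matrix.SpecialLinearGroup (Fin 2) ℝ × Matrix.SpecialLinearGroup (Fin 2) ℝ) :=
    ⋂ (i : Fin 2) (j : Fin 2),
      ((fun p : Matrix.SpecialLinearGroup (Fin 2) ℝ × Matrix.SpecialLinearGroup (Fin 2) ℝ =>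
          ((p.1 : Matrix (Fin 2) (Fin 2) ℝ) i j)) ⁻¹'
        Metric.ball ((x.val.1 : Matrix (Fin 2) (Fin 2) ℝ) i j) 1) ∩
      ((fun p : Matrix.SpecialLinearGroup (Fin 2) ℝ × Matrix.SpecialLinearGroup (Fin 2) ℝ =>
          ((p.2 : Matrix (Fin 2) (Fin 2) ℝ) i j)) ⁻¹'
        Metric.ball ((x.val.2 : Matrix (Fin 2) (Fin 2) ℝ) i j) 1) with hU
  have hUopen : IsOpen U := by
    refine isOpen_iInter_of_finite fun i => isOpen_iInter_of_finite fun j => IsOpen.inter ?_ ?_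
    · exact Metric.isOpen_ball.preimage
        ((continuous_subtype_val.comp continuous_fst).matrix_elem i j)
    · exact Metric.isOpen_ball.preimage
        ((continuous_subtype_val.comp continuous_snd).matrix_elem i j)
  have : ({x} : Set _) = Subtype.val ⁻¹' U := by
    ext y
    simp only [Set.mem_singleton_iff, Set.mem_preimage, hU, Set.mem_iInter, Set.mem_inter_iff,
      Set.mem_preimage, Metric.mem_ball]
    constructor
    · rintro rfl
      intro i j
      simp [dist_self]
    · intro hy
      obtain ⟨B, hB⟩ := y.2
      have hBA : ∀ i j, (B : Matrix (Fin 2) (Fin 2) (ℤ√2)) i j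
          = (A : Matrix (Fin 2) (Fin 2) (ℤ√2)) i j := by
        intro i j
        by_contra hne
        have hne' : (B : Matrix (Fin 2) (Fin 2) (ℤ√2)) i j - (A : Matrix _ _ _) i j ≠ 0 :=
          sub_ne_zero_of_ne hne
        have h1 := (hy i j).1
        have h2 := (hy i j).2
        rw [← hA] at h1 h2
        rw [← hB] at h1 h2
        simp only [MonoidHom.prod_apply, Matrix.SpecialLinearGroup.map_apply_coe,
          RingHom.mapMatrix_apply, Matrix.map_apply, RingHom.comp_apply, Real.dist_eq] at h1 h2
        rw [← map_sub] at h1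
        rw [← map_sub, ← map_sub] at h2
        rcases key σ hσ _ hne' with h | h
        · linarith
        · linarith
      have hBA' : B = A := Subtype.ext (Matrix.ext hBA)
      apply Subtype.ext
      rw [← hA, ← hB, hBA']
  rw [this]
  exact hUopen.preimage continuous_subtype_val
end

section
/- Let β = 2^{1/4}, P = [[5+β²−3β−2β³, 1],[−1, 0]] and Q = [[3+2β², 1],[−1, 0]] in SL(2,ℝ), and let σ₂(P) = [[5+β²+3β+2β³, 1],[−1, 0]]. Then: (a) |tr(P)| < 2 and P has infinite order in SL(2,ℝ); (b) |tr(Q)| > 2; (c) |tr(σ₂(P))| > 2; and (d) σ₂(P) and Q have no common eigenvector in ℂ². -/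
open Polynomial

/-- The matrix `σ₂(P) = [[5+β²+3β+2β³, 1],[−1, 0]] ∈ SL(2,ℝ)`, the image of `P` under the
Galois embedding `β ↦ −β` applied entrywise. -/
noncomputable def matP2 : Matrix.SpecialLinearGroup (Fin 2) ℝ :=
  ⟨!![5 + rootBeta ^ 2 + 3 * rootBeta + 2 * rootBeta ^ 3, 1; -1, 0], by
    simp [Matrix.det_fin_two_of]⟩

/- ### Auxiliary facts about `β` -/

lemma beta_pow4 : rootBeta ^ 4 = 2 := by
  rw [rootBeta, ← Real.rpow_natCast ((2:ℝ) ^ ((1:ℝ)/4)) 4, ← Real.rpow_mul (by norm_num)]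
  norm_num

lemma beta_pos : 0 < rootBeta := Real.rpow_pos_of_pos (by norm_num) _

lemma beta_lb : 1.18 < rootBeta := by
  by_contra h
  push_neg at h
  have := pow_le_pow_left₀ beta_pos.le h 4
  rw [beta_pow4] at this
  norm_num at this

lemma beta_ub : rootBeta < 1.19 := by
  by_contra h
  push_neg at h
  have := pow_le_pow_left₀ (by norm_num) h 4
  rw [beta_pow4] at this
  norm_num at this

/- ### Irreducibility of `X⁴ − 2` over `ℚ` -/

lemma irrZ : Irreducible ((X : ℤ[X]) ^ 4 - C 2) := by
  apply irreducible_of_eisenstein_criterion (P := Ideal.span {(2:ℤ)})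
  · rw [Ideal.span_singleton_prime (by norm_num)]
    exact Int.prime_two
  · rw [(monic_X_pow_sub_C (2:ℤ) (by norm_num)).leadingCoeff]
    rw [Ideal.mem_span_singleton]
    norm_num
  · intro n hn
    rw [degree_X_pow_sub_C (by norm_num)] at hn
    have hn' : n < 4 := by exact_mod_cast hn
    rw [Ideal.mem_span_singleton]
    interval_cases n <;> simp [coeff_X_pow]
  · rw [degree_X_pow_sub_C (by norm_num)]
    norm_num
  · rw [Ideal.span_singleton_pow, Ideal.mem_span_singleton]
    norm_num
  · exact (monic_X_pow_sub_C (2:ℤ) (by norm_num)).isPrimitive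

lemma irrQ : Irreducible ((X : ℚ[X]) ^ 4 - C 2) := by
  have h := ((monic_X_pow_sub_C (2:ℤ) (by norm_num)).isPrimitive.irreducible_iff_irreducible_map_fraction_map (K := ℚ)).mp irrZ
  have : ((X : ℤ[X]) ^ 4 - C 2).map (algebraMap ℤ ℚ) = (X : ℚ[X]) ^ 4 - C 2 := by
    simp [Polynomial.map_sub, Polynomial.map_pow]; norm_cast
  rwa [this] at h

instance factIrr : Fact (Irreducible ((X : ℚ[X]) ^ 4 - C 2)) := ⟨irrQ⟩

/- ### The number field `ℚ(β)` and its two real embeddings -/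

abbrev Kf : Type := AdjoinRoot ((X : ℚ[X]) ^ 4 - C 2)

noncomputable def rt : Kf := AdjoinRoot.root _

noncomputable def phi (b : ℝ) (hb : b ^ 4 = 2) : Kf →+* ℝ :=
  AdjoinRoot.lift (algebraMap ℚ ℝ) b (by simp [eval₂_sub, eval₂_pow, hb])

lemma phi_rt (b : ℝ) (hb : b ^ 4 = 2) : phi b hb rt = b := AdjoinRoot.lift_root _

noncomputable def matPK : Matrix (Fin 2) (Fin 2) Kf :=
  !![5 + rt ^ 2 - 3 * rt - 2 * rt ^ 3, 1; -1, 0]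

lemma map_matPK (b : ℝ) (hb : b ^ 4 = 2) :
    matPK.map (phi b hb) = !![5 + b ^ 2 - 3 * b - 2 * b ^ 3, 1; -1, 0] := by
  ext i j
  fin_cases i <;> fin_cases j <;>
    simp [matPK, Matrix.map_apply, map_add, map_sub, map_mul, map_pow, map_ofNat, phi_rt]

lemma neg_beta_pow4 : (-rootBeta) ^ 4 = 2 := by
  rw [neg_pow]
  norm_num
  exact beta_pow4

lemma map_matPK_beta : matPK.map (phi rootBeta beta_pow4) = (matP : Matrix (Fin 2) (Fin 2) ℝ) :=
  map_matPK _ _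

lemma map_matPK_negbeta :
    matPK.map (phi (-rootBeta) neg_beta_pow4) = (matP2 : Matrix (Fin 2) (Fin 2) ℝ) := by
  rw [map_matPK]
  show _ = !![5 + rootBeta ^ 2 + 3 * rootBeta + 2 * rootBeta ^ 3, 1; -1, 0]
  congr 1
  ring_nf

/- ### Hyperbolic matrices have infinite order -/

def cheb (t : ℝ) : ℕ → ℝ
  | 0 => 0
  | 1 => 1
  | (n+2) => t * cheb t (n+1) - cheb t n

lemma cheb_mono {t : ℝ} (ht : 2 < t) : ∀ n, cheb t n < cheb t (n+1) ∧ 0 ≤ cheb t n := by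
  intro n
  induction n with
  | zero => simp [cheb]
  | succ m ih =>
    obtain ⟨h1, h2⟩ := ih
    have hpos : 0 < cheb t (m+1) := lt_of_le_of_lt h2 h1
    constructor
    · show cheb t (m+1) < cheb t (m+2)
      have : cheb t (m+2) = t * cheb t (m+1) - cheb t m := rfl
      nlinarith
    · linarith

lemma cheb_one_le {t : ℝ} (ht : 2 < t) (n : ℕ) : 1 ≤ cheb t (n+1) := by
  induction n with
  | zero => simp [cheb]
  | succ m ih => exact le_trans ih (le_of_lt (cheb_mono ht (m+1)).1)

lemma hyp_pow (t : ℝ) : ∀ n, (!![t, 1; -1, 0] : Matrix (Fin 2) (Fin 2) ℝ) ^ (n+1)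
    = !![cheb t (n+2), cheb t (n+1); -(cheb t (n+1)), -(cheb t n)] := by
  intro n
  induction n with
  | zero =>
    show (!![t, 1; -1, 0] : Matrix (Fin 2) (Fin 2) ℝ) ^ 1 = _
    rw [pow_one]
    have h2 : cheb t 2 = t * 1 - 0 := rfl
    have h1 : cheb t 1 = 1 := rfl
    have h0 : cheb t 0 = 0 := rfl
    rw [h2, h1, h0]
    norm_num
  | succ m ih =>
    rw [pow_succ, ih, Matrix.mul_fin_two]
    have h3 : cheb t (m+3) = t * cheb t (m+2) - cheb t (m+1) := rfl
    have h2 : cheb t (m+2) = t * cheb t (m+1) - cheb t m := rfl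
    rw [h3, h2]
    ext i j
    fin_cases i <;> fin_cases j <;> simp <;> ring

lemma hyp_pow_ne_one {t : ℝ} (ht : 2 < t) {n : ℕ} (hn : 0 < n) :
    (!![t, 1; -1, 0] : Matrix (Fin 2) (Fin 2) ℝ) ^ n ≠ 1 := by
  obtain ⟨m, rfl⟩ := Nat.exists_eq_add_of_lt hn
  rw [zero_add, hyp_pow]
  intro h
  have h01 := congrFun (congrFun h 0) 1
  simp [Matrix.one_apply] at h01
  have := cheb_one_le ht m
  linarith

lemma trP2_gt : 2 < 5 + rootBeta ^ 2 + 3 * rootBeta + 2 * rootBeta ^ 3 := by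
  have := beta_pos
  nlinarith

/- ### P has infinite order -/

lemma matP_infinite_order : ¬ IsOfFinOrder matP := by
  intro h
  obtain ⟨n, hn, hpow⟩ := isOfFinOrder_iff_pow_eq_one.mp h
  -- pass to matrix level
  have hmat : (matP : Matrix (Fin 2) (Fin 2) ℝ) ^ n = 1 := by
    have := congrArg (Subtype.val) hpow
    simpa using this
  -- lift to Kf
  have hK : matPK ^ n = 1 := by
    have hinj : Function.Injective (phi rootBeta beta_pow4) := (phi rootBeta beta_pow4).injective
    apply Matrix.map_injective hinj
    show (matPK ^ n).map (phi rootBeta beta_pow4) = (1 : Matrix (Fin 2) (Fin 2) Kf).map (phi rootBeta beta_pow4)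
    have e1 : (matPK ^ n).map (phi rootBeta beta_pow4)
        = (matPK.map (phi rootBeta beta_pow4)) ^ n := by
      simp only [← RingHom.mapMatrix_apply, map_pow]
    have e2 : (1 : Matrix (Fin 2) (Fin 2) Kf).map (phi rootBeta beta_pow4) = 1 := by
      simp only [← RingHom.mapMatrix_apply, map_one]
    rw [e1, e2, map_matPK_beta, hmat]
  -- push down to the conjugate embedding
  have hK2 : (matP2 : Matrix (Fin 2) (Fin 2) ℝ) ^ n = 1 := by
    have := congrArg (fun M => M.map (phi (-rootBeta) neg_beta_pow4)) hK
    rw [show (matPK ^ n).map (phi (-rootBeta) neg_beta_pow4)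
        = (matPK.map (phi (-rootBeta) neg_beta_pow4)) ^ n by
          simp only [← RingHom.mapMatrix_apply, map_pow],
      show (1 : Matrix (Fin 2) (Fin 2) Kf).map (phi (-rootBeta) neg_beta_pow4) = 1 by
          simp only [← RingHom.mapMatrix_apply, map_one],
      map_matPK_negbeta] at this
    exact this
  exact hyp_pow_ne_one trP2_gt hn hK2

lemma trace_of (a : ℝ) : Matrix.trace (!![a, 1; -1, 0] : Matrix (Fin 2) (Fin 2) ℝ) = a := by
  simp [Matrix.trace_fin_two_of]

/-- (a) `P` is elliptic (`|tr P| < 2`) of infinite order; (b) `Q` is hyperbolic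
(`|tr Q| > 2`); (c) `σ₂(P)` is hyperbolic; (d) `σ₂(P)` and `Q` have no common eigenvector
in `ℂ²`. -/
theorem stmt14 :
    (|Matrix.trace ((matP : Matrix (Fin 2) (Fin 2) ℝ))| < 2 ∧ ¬ IsOfFinOrder matP) ∧
    2 < |Matrix.trace ((matQ : Matrix (Fin 2) (Fin 2) ℝ))| ∧
    2 < |Matrix.trace ((matP2 : Matrix (Fin 2) (Fin 2) ℝ))| ∧
    ¬ ∃ v : Fin 2 → ℂ, v ≠ 0 ∧
      (∃ c : ℂ, Matrix.mulVec
        (((matP2 : Matrix (Fin 2) (Fin 2) ℝ)).map (Complex.ofReal)) v = c • v) ∧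
      (∃ c : ℂ, Matrix.mulVec
        (((matQ : Matrix (Fin 2) (Fin 2) ℝ)).map (Complex.ofReal)) v = c • v) := by
  have hb4 := beta_pow4
  have hlb := beta_lb
  have hub := beta_ub
  have hpos := beta_pos
  refine ⟨⟨?_, matP_infinite_order⟩, ?_, ?_, ?_⟩
  · rw [show (matP : Matrix (Fin 2) (Fin 2) ℝ) = !![5 + rootBeta ^ 2 - 3 * rootBeta - 2 * rootBeta ^ 3, 1; -1, 0] from rfl, trace_of, abs_lt]
    constructor <;> nlinarith
  · rw [show (matQ : Matrix (Fin 2) (Fin 2) ℝ) = !![3 + 2 * rootBeta ^ 2, 1; -1, 0] from rfl, trace_of]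
    rw [abs_of_pos (by nlinarith)]
    nlinarith
  · rw [show (matP2 : Matrix (Fin 2) (Fin 2) ℝ) = !![5 + rootBeta ^ 2 + 3 * rootBeta + 2 * rootBeta ^ 3, 1; -1, 0] from rfl, trace_of]
    rw [abs_of_pos (by nlinarith)]
    exact trP2_gt
  · rintro ⟨v, hv, ⟨c, hc⟩, ⟨d, hd⟩⟩
    set p : ℝ := 5 + rootBeta ^ 2 + 3 * rootBeta + 2 * rootBeta ^ 3 with hp
    set q : ℝ := 3 + 2 * rootBeta ^ 2 with hq
    have hc0 := congrFun hc 0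
    have hc1 := congrFun hc 1
    have hd0 := congrFun hd 0
    have hd1 := congrFun hd 1
    simp [show (matP2 : Matrix (Fin 2) (Fin 2) ℝ) = !![p, 1; -1, 0] from rfl,
      show (matQ : Matrix (Fin 2) (Fin 2) ℝ) = !![q, 1; -1, 0] from rfl,
      Matrix.mulVec, dotProduct, Fin.sum_univ_two, Matrix.map_apply] at hc0 hc1 hd0 hd1
    -- hc0 : p * v 0 + v 1 = c * v 0 ; hc1 : -(v 0) = c * v 1, etc.
    have hpq : (p : ℂ) ≠ (q : ℂ) := by
      simp only [Ne, Complex.ofReal_inj]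
      intro h
      rw [hp, hq] at h
      nlinarith
    have hv1 : v 1 ≠ 0 := by
      intro h1
      apply hv
      have h0 : v 0 = 0 := by
        rw [h1] at hc1
        simpa using hc1
      funext i
      fin_cases i <;> simp [h0, h1]
    have hcd : c = d := by
      have : c * v 1 = d * v 1 := by rw [← hc1, ← hd1]
      exact mul_right_cancel₀ hv1 this
    have hv0 : v 0 = 0 := by
      have hsub : ((p : ℂ) - q) * v 0 = 0 := by
        rw [hcd] at hc0
        have := sub_eq_zero.mpr (hc0.trans hd0.symm)
        ring_nf at this ⊢
        linear_combination this
      rcases mul_eq_zero.mp hsub with h | h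
      · exact absurd (sub_eq_zero.mp h) hpq
      · exact h
    apply hv1
    rw [hv0] at hc0
    simpa using hc0
end

section
/- Let β = 2^{1/4} and i the imaginary unit. For any integers a,m,p,e,b,n,q,f,c,k,r,g,d,l,s,h, set x₁₁ = a+mβ+pβ²+eβ³, x₁₂ = b+nβ+qβ²+fβ³, x₂₁ = c+kβ+rβ²+gβ³, x₂₂ = d+lβ+sβ²+hβ³, and for each k' ∈ {0,1,2,3} let A_{k'} be the 2×2 complex matrix whose (u,v) entry is obtained from x_{uv} by replacing β with β·i^{k'} (so A₀ has entries x_{uv}). Let M be the 8×8 real matrix with rows [a, 2e, 2p, 2m, b, 2f, 2q, 2n], [m, a, 2e, 2p, n, b, 2f, 2q], [p, m, a, 2e, q, n, b, 2f], [e, p, m, a, f, q, n, b], [c, 2g, 2r, 2k, d, 2h, 2s, 2l], [k, c, 2g, 2r, l, d, 2h, 2s], [r, k, c, 2g, s, l, d, 2h], [g, r, k, c, h, s, l, d]. Then the characteristic polynomial of M, viewed over ℂ, equals the product of the characteristic polynomials of A₀, A₁, A₂ and A₃; in particular, the multiset of complex eigenvalues of M is the union of the multisets of eigenvalues of A₀,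 A₁, A₂, A₃. -/
open Complex

/-- The image of `a + mβ + pβ² + eβ³` under the Galois embedding `β ↦ β·i^k`. -/
noncomputable def galEntry (a m p e : ℤ) (k : ℕ) : ℂ :=
  (a : ℂ) + (m : ℂ) * (rootBeta : ℂ) * I ^ k
    + (p : ℂ) * (rootBeta : ℂ) ^ 2 * I ^ (2 * k)
    + (e : ℂ) * (rootBeta : ℂ) ^ 3 * I ^ (3 * k)

/-- The matrix `A_k = σ_k(A)`, the entrywise Galois conjugate under `β ↦ β·i^k` of the
matrix `A = [[a+mβ+pβ²+eβ³, b+nβ+qβ²+fβ³],[c+kβ+rβ²+gβ³, d+lβ+sβ²+hβ³]]`. -/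
noncomputable def galMat (a m p e b n q f c kk r g d l s h : ℤ) (k : ℕ) :
    Matrix (Fin 2) (Fin 2) ℂ :=
  !![galEntry a m p e k, galEntry b n q f k;
     galEntry c kk r g k, galEntry d l s h k]

/-- The 8×8 real matrix `M = Ψ(A)` of the paper. -/
noncomputable def psiMat (a m p e b n q f c kk r g d l s h : ℤ) :
    Matrix (Fin 8) (Fin 8) ℝ :=
  !![(a : ℝ), 2*e, 2*p, 2*m, (b : ℝ), 2*f, 2*q, 2*n;
     (m : ℝ), a, 2*e, 2*p, (n : ℝ), b, 2*f, 2*q;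
     (p : ℝ), m, a, 2*e, (q : ℝ), n, b, 2*f;
     (e : ℝ), p, m, a, (f : ℝ), q, n, b;
     (c : ℝ), 2*g, 2*r, 2*kk, (d : ℝ), 2*h, 2*s, 2*l;
     (kk : ℝ), c, 2*g, 2*r, (l : ℝ), d, 2*h, 2*s;
     (r : ℝ), kk, c, 2*g, (s : ℝ), l, d, 2*h;
     (g : ℝ), r, kk, c, (h : ℝ), s, l, d]

/- ### Auxiliary machinery -/

lemma rootBeta4 : ((rootBeta : ℂ)) ^ 4 = 2 := by
  have : rootBeta ^ 4 = 2 := by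
    rw [rootBeta, ← Real.rpow_natCast ((2:ℝ) ^ ((1:ℝ)/4)) 4, ← Real.rpow_mul (by norm_num)]
    norm_num
  rw [← Complex.ofReal_pow, this]; norm_num

lemma rootBeta5 : ((rootBeta : ℂ)) ^ 5 = 2 * rootBeta := by
  rw [show (5:ℕ) = 4 + 1 from rfl, pow_add, rootBeta4]; ring

lemma rootBeta6 : ((rootBeta : ℂ)) ^ 6 = 2 * (rootBeta:ℂ) ^ 2 := by
  rw [show (6:ℕ) = 4 + 2 from rfl, pow_add, rootBeta4]

/-- If `Q * M = B * Q` with `det Q ≠ 0`, then `M` and `B` have the same char. polynomial. -/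
lemma charpoly_of_conj {n : Type*} [DecidableEq n] [Fintype n] (Q M B : Matrix n n ℂ)
    (hQB : Q * M = B * Q) (hdet : Q.det ≠ 0) : M.charpoly = B.charpoly := by
  have h : Q.map Polynomial.C * M.charmatrix = B.charmatrix * Q.map Polynomial.C := by
    rw [Matrix.charmatrix, Matrix.charmatrix, mul_sub, sub_mul]
    rw [RingHom.mapMatrix_apply, RingHom.mapMatrix_apply, ← Matrix.map_mul, hQB, Matrix.map_mul]
    rw [(Matrix.scalar_commute (Polynomial.X : Polynomial ℂ) (fun r => Commute.all _ _)
      (Q.map Polynomial.C)).eq]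
  have hd := congrArg Matrix.det h
  rw [Matrix.det_mul, Matrix.det_mul] at hd
  have hm : (Q.map Polynomial.C).det = Polynomial.C Q.det := by
    rw [← RingHom.mapMatrix_apply, ← RingHom.map_det]
  rw [hm] at hd
  have hC : (Polynomial.C (Q.det) : Polynomial ℂ) ≠ 0 := fun hh => hdet (by simpa using hh)
  rw [Matrix.charpoly, Matrix.charpoly]
  rw [mul_comm (Polynomial.C Q.det)] at hd
  exact mul_right_cancel₀ hC hd

lemma charmatrix_blockDiagonal {o n : Type*} [DecidableEq o] [DecidableEq n] [Fintype o]
    [Fintype n] (f : o → Matrix n n ℂ) :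
    (Matrix.blockDiagonal f).charmatrix = Matrix.blockDiagonal (fun k => (f k).charmatrix) := by
  ext ⟨i, k⟩ ⟨j, k'⟩
  by_cases h : k = k' <;> by_cases h2 : i = j <;>
    simp [Matrix.charmatrix_apply, Matrix.blockDiagonal_apply, Matrix.diagonal, h, h2,
      Prod.ext_iff]

lemma charpoly_blockDiagonal {o n : Type*} [DecidableEq o] [DecidableEq n] [Fintype o] [Fintype n]
    (f : o → Matrix n n ℂ) :
    (Matrix.blockDiagonal f).charpoly = ∏ k, (f k).charpoly := by
  rw [Matrix.charpoly, charmatrix_blockDiagonal, Matrix.det_blockDiagonal]; rfl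

/-- The "Vandermonde-type" conjugating matrix. -/
noncomputable def Qm : Matrix (Fin 2 × Fin 4) (Fin 2 × Fin 4) ℂ :=
  Matrix.of fun x y =>
    if x.1 = y.1 then (rootBeta : ℂ) ^ (y.2 : ℕ) * I ^ ((x.2 : ℕ) * (y.2 : ℕ)) else 0

noncomputable def Qinvm : Matrix (Fin 2 × Fin 4) (Fin 2 × Fin 4) ℂ :=
  Matrix.of fun y x =>
    if y.1 = x.1 then (rootBeta : ℂ) ^ (4 - (y.2 : ℕ)) * (-I) ^ ((y.2 : ℕ) * (x.2 : ℕ)) / 8 else 0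

def splitIdx : Fin 8 ≃ Fin 2 × Fin 4 where
  toFun i := (⟨i / 4, by omega⟩, ⟨i % 4, by omega⟩)
  invFun p := ⟨4 * p.1 + p.2, by omega⟩
  left_inv := by decide
  right_inv := by decide

set_option maxHeartbeats 4000000 in
lemma QQinv : Qm * Qinvm = 1 := by
  ext ⟨u, k⟩ ⟨v, k'⟩
  fin_cases u <;> fin_cases k <;> fin_cases v <;> fin_cases k' <;>
  · simp only [Qm, Qinvm, Matrix.mul_apply, Fintype.sum_prod_type, Fin.sum_univ_four,
      Fin.sum_univ_two, Matrix.of_apply, Fin.isValue, Matrix.one_apply, Prod.mk.injEq,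
      show ((0:Fin 4):ℕ) = 0 from rfl, show ((1:Fin 4):ℕ) = 1 from rfl,
      show ((2:Fin 4):ℕ) = 2 from rfl, show ((3:Fin 4):ℕ) = 3 from rfl,
      show ((0:Fin 2):ℕ) = 0 from rfl, show ((1:Fin 2):ℕ) = 1 from rfl]
    norm_num [rootBeta4]
    try simp [pow_succ, rootBeta4]
    try ring_nf
    try norm_num [rootBeta4, Complex.I_sq]
    try ring

set_option maxHeartbeats 8000000 in
lemma QMBQ (a m p e b n q f c kk r g d l s h : ℤ) :
    Qm * (Matrix.reindex splitIdx splitIdx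
        ((psiMat a m p e b n q f c kk r g d l s h).map Complex.ofReal))
      = (Matrix.blockDiagonal
          (fun k : Fin 4 => galMat a m p e b n q f c kk r g d l s h (k : ℕ))) * Qm := by
  ext ⟨u, k⟩ ⟨v, j⟩
  fin_cases u <;> fin_cases k <;> fin_cases v <;> fin_cases j <;>
  · simp only [Qm, Matrix.mul_apply, Fintype.sum_prod_type, Fin.sum_univ_four,
      Fin.sum_univ_two, Matrix.of_apply, Fin.isValue, Matrix.reindex_apply,
      Matrix.submatrix_apply, splitIdx, Equiv.coe_fn_symm_mk, Matrix.map_apply,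
      Matrix.blockDiagonal_apply, psiMat, galMat, galEntry,
      show ((0:Fin 4):ℕ) = 0 from rfl, show ((1:Fin 4):ℕ) = 1 from rfl,
      show ((2:Fin 4):ℕ) = 2 from rfl, show ((3:Fin 4):ℕ) = 3 from rfl,
      show ((0:Fin 2):ℕ) = 0 from rfl, show ((1:Fin 2):ℕ) = 1 from rfl]
    norm_num [rootBeta4, rootBeta5, rootBeta6]
    try simp [pow_succ, rootBeta4, rootBeta5, rootBeta6]
    try ring_nf
    try norm_num [rootBeta4, rootBeta5, rootBeta6, Complex.I_sq]
    try ring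

set_option maxRecDepth 10000 in
/-- The characteristic polynomial of `M = Ψ(A)`, viewed over `ℂ`, equals the product of
the characteristic polynomials of the Galois conjugates `A₀, A₁, A₂, A₃`; in particular
the multiset of complex eigenvalues of `M` is the union of those of `A₀, A₁, A₂, A₃`. -/
theorem stmt15 (a m p e b n q f c kk r g d l s h : ℤ) :
    Matrix.charpoly ((psiMat a m p e b n q f c kk r g d l s h).map (Complex.ofReal))
      = ∏ k : Fin 4, Matrix.charpoly (galMat a m p e b n q f c kk r g d l s h (k : ℕ)) ∧
    (Matrix.charpoly
        ((psiMat a m p e b n q f c kk r g d l s h).map (Complex.ofReal))).roots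
      = ∑ k : Fin 4,
          (Matrix.charpoly (galMat a m p e b n q f c kk r g d l s h (k : ℕ))).roots := by
  have hdet : Qm.det ≠ 0 := Matrix.det_ne_zero_of_right_inverse QQinv
  have hmain :
      Matrix.charpoly ((psiMat a m p e b n q f c kk r g d l s h).map (Complex.ofReal))
        = ∏ k : Fin 4, Matrix.charpoly (galMat a m p e b n q f c kk r g d l s h (k : ℕ)) := by
    rw [← Matrix.charpoly_reindex splitIdx
      ((psiMat a m p e b n q f c kk r g d l s h).map (Complex.ofReal))]
    rw [charpoly_of_conj Qm _ _ (QMBQ a m p e b n q f c kk r g d l s h) hdet]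
    exact charpoly_blockDiagonal _
  refine ⟨hmain, ?_⟩
  rw [hmain]
  rw [Polynomial.roots_prod _ _ (by
    apply Polynomial.Monic.ne_zero
    exact Polynomial.monic_prod_of_monic _ _ fun k _ => Matrix.charpoly_monic _)]
  simp [Finset.sum, Multiset.bind, Multiset.join]
end

section
/- The set of pairs (A, B) ∈ SL(2,ℝ) × SL(2,ℝ) such that A and B freely generate a free subgroup of SL(2,ℝ) of rank two is dense in SL(2,ℝ) × SL(2,ℝ). -/
open Matrix

noncomputable section

abbrev SL2 := Matrix.SpecialLinearGroup (Fin 2) ℝ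

def A0 : SL2 := ⟨!![1,3;0,1], by norm_num [Matrix.det_fin_two_of]⟩
def B0 : SL2 := ⟨!![1,0;3,1], by norm_num [Matrix.det_fin_two_of]⟩

abbrev V2 := {v : Fin 2 → ℝ // v ≠ 0}

instance : SMul SL2 V2 :=
  ⟨fun g v => ⟨(g : Matrix (Fin 2) (Fin 2) ℝ) *ᵥ (v : Fin 2 → ℝ), by
    intro h
    apply v.2
    have h2 : (g⁻¹ : SL2).1 *ᵥ ((g : Matrix (Fin 2) (Fin 2) ℝ) *ᵥ (v : Fin 2 → ℝ)) = 0 := by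
      rw [h, Matrix.mulVec_zero]
    rwa [Matrix.mulVec_mulVec, ← Matrix.SpecialLinearGroup.coe_mul, inv_mul_cancel,
      Matrix.SpecialLinearGroup.coe_one, Matrix.one_mulVec] at h2⟩⟩

theorem smul_coe (g : SL2) (v : V2) :
    ((g • v : V2) : Fin 2 → ℝ) = (g : Matrix (Fin 2) (Fin 2) ℝ) *ᵥ (v : Fin 2 → ℝ) := rfl

instance : MulAction SL2 V2 where
  one_smul v := by ext; simp [smul_coe]
  mul_smul g h v := by
    ext i
    simp only [smul_coe, Matrix.SpecialLinearGroup.coe_mul, Matrix.mulVec_mulVec]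

theorem A0_smul (v : V2) (i : Fin 2) :
    ((A0 • v : V2) : Fin 2 → ℝ) i = ![(v:Fin 2 → ℝ) 0 + 3 * (v:Fin 2 → ℝ) 1, (v:Fin 2 → ℝ) 1] i := by
  fin_cases i <;>
    (rw [smul_coe]; simp [A0, Matrix.mulVec, dotProduct, Fin.sum_univ_two]) <;> ring

theorem B0_smul (v : V2) (i : Fin 2) :
    ((B0 • v : V2) : Fin 2 → ℝ) i = ![(v:Fin 2 → ℝ) 0, 3 * (v:Fin 2 → ℝ) 0 + (v:Fin 2 → ℝ) 1] i := by
  fin_cases i <;>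
    (rw [smul_coe]; simp [B0, Matrix.mulVec, dotProduct, Fin.sum_univ_two]) <;> ring

theorem A0_inv_smul (v : V2) (i : Fin 2) :
    ((A0⁻¹ • v : V2) : Fin 2 → ℝ) i
      = ![(v:Fin 2 → ℝ) 0 - 3 * (v:Fin 2 → ℝ) 1, (v:Fin 2 → ℝ) 1] i := by
  fin_cases i <;>
    (rw [smul_coe, Matrix.SpecialLinearGroup.coe_inv]; simp [A0, Matrix.adjugate_fin_two,
      Matrix.mulVec, dotProduct, Fin.sum_univ_two]) <;> ring

theorem B0_inv_smul (v : V2) (i : Fin 2) :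
    ((B0⁻¹ • v : V2) : Fin 2 → ℝ) i
      = ![(v:Fin 2 → ℝ) 0, -3 * (v:Fin 2 → ℝ) 0 + (v:Fin 2 → ℝ) 1] i := by
  fin_cases i <;>
    (rw [smul_coe, Matrix.SpecialLinearGroup.coe_inv]; simp [B0, Matrix.adjugate_fin_two,
      Matrix.mulVec, dotProduct, Fin.sum_univ_two]) <;> ring

def XS : Fin 2 → Set V2 :=
  ![{v | (v:Fin 2 → ℝ) 1 ≠ 0 ∧ 3*((v:Fin 2 → ℝ) 1)^2 ≤ 2*((v:Fin 2 → ℝ) 0)*((v:Fin 2 → ℝ) 1)},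
    {v | (v:Fin 2 → ℝ) 0 ≠ 0 ∧ 3*((v:Fin 2 → ℝ) 0)^2 ≤ 2*((v:Fin 2 → ℝ) 0)*((v:Fin 2 → ℝ) 1)}]

def YS : Fin 2 → Set V2 :=
  ![{v | (v:Fin 2 → ℝ) 1 = 0 ∨ 2*((v:Fin 2 → ℝ) 0)*((v:Fin 2 → ℝ) 1) ≤ -(3*((v:Fin 2 → ℝ) 1)^2)},
    {v | (v:Fin 2 → ℝ) 0 = 0 ∨ 2*((v:Fin 2 → ℝ) 0)*((v:Fin 2 → ℝ) 1) ≤ -(3*((v:Fin 2 → ℝ) 0)^2)}]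

theorem nz (v : V2) : ¬((v:Fin 2 → ℝ) 0 = 0 ∧ (v:Fin 2 → ℝ) 1 = 0) := by
  rintro ⟨h0, h1⟩
  apply v.2
  funext i
  fin_cases i <;> assumption

theorem sq_pos' {x : ℝ} (h : x ≠ 0) : 0 < x ^ 2 :=
  lt_of_le_of_ne (sq_nonneg x) (Ne.symm (pow_ne_zero 2 h))

open Pointwise in
theorem free_pair : Function.Injective (FreeGroup.lift ![A0, B0] : FreeGroup (Fin 2) →* SL2) := by
  apply FreeGroup.injective_lift_of_ping_pong ![A0, B0] XS YS
  · -- nonempty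
    intro i
    fin_cases i
    · exact ⟨⟨![2,1], by intro h; simpa using congrFun h 0⟩, by norm_num [XS]⟩
    · exact ⟨⟨![1,2], by intro h; simpa using congrFun h 0⟩, by norm_num [XS]⟩
  · -- X pairwise disjoint
    intro i j hij
    simp only [Function.onFun]
    fin_cases i <;> fin_cases j <;> (try exact absurd rfl hij) <;>
    · rw [Set.disjoint_left]
      rintro v ⟨h1, h2⟩ ⟨h3, h4⟩
      simp only [XS, Matrix.cons_val_zero, Matrix.cons_val_one, Matrix.head_cons,
        Set.mem_setOf_eq] at *
      nlinarith [sq_nonneg ((v:Fin 2 → ℝ) 0 - (v:Fin 2 → ℝ) 1),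
        sq_nonneg ((v:Fin 2 → ℝ) 0 + (v:Fin 2 → ℝ) 1), sq_pos' h1, sq_pos' h3]
  · -- Y pairwise disjoint
    intro i j hij
    simp only [Function.onFun]
    fin_cases i <;> fin_cases j <;> (try exact absurd rfl hij) <;>
    · rw [Set.disjoint_left]
      rintro v h1 h2
      simp only [YS, Matrix.cons_val_zero, Matrix.cons_val_one, Matrix.head_cons,
        Set.mem_setOf_eq] at *
      rcases h1 with h1 | h1 <;> rcases h2 with h2 | h2 <;>
        (apply nz v; constructor) <;>
        nlinarith [sq_nonneg ((v:Fin 2 → ℝ) 0 - (v:Fin 2 → ℝ) 1),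
          sq_nonneg ((v:Fin 2 → ℝ) 0 + (v:Fin 2 → ℝ) 1),
          sq_nonneg ((v:Fin 2 → ℝ) 0), sq_nonneg ((v:Fin 2 → ℝ) 1)]
  · -- X i disjoint Y j
    intro i j
    fin_cases i <;> fin_cases j <;>
    · rw [Set.disjoint_left]
      rintro v ⟨h1, h2⟩ h3
      simp only [XS, YS, Matrix.cons_val_zero, Matrix.cons_val_one, Matrix.head_cons,
        Set.mem_setOf_eq] at *
      rcases h3 with h3 | h3 <;>
      first
      | exact h1 h3
      | nlinarith [sq_nonneg ((v:Fin 2 → ℝ) 0 - (v:Fin 2 → ℝ) 1),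
          sq_nonneg ((v:Fin 2 → ℝ) 0 + (v:Fin 2 → ℝ) 1),
          sq_nonneg ((v:Fin 2 → ℝ) 0), sq_nonneg ((v:Fin 2 → ℝ) 1), sq_pos' h1]
  · -- a i • (Y i)ᶜ ⊆ X i
    intro i
    fin_cases i <;> simp only [Fin.mk_zero, Fin.mk_one, Pi.inv_apply, Matrix.cons_val_zero,
      Matrix.cons_val_one, Matrix.head_cons] <;>
    · rintro w ⟨u, hu, rfl⟩
      simp only [YS, Set.mem_compl_iff, Set.mem_setOf_eq, not_or, Matrix.cons_val_zero,
        Matrix.cons_val_one, Matrix.head_cons, not_le] at hu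
      obtain ⟨h1, h2⟩ := hu
      simp only [XS, Matrix.cons_val_zero, Matrix.cons_val_one, Matrix.head_cons,
        Set.mem_setOf_eq]
      first
      | (constructor
         · rw [show ((A0 • u : V2) : Fin 2 → ℝ) 1 = (u:Fin 2 → ℝ) 1 by
             simpa using A0_smul u 1]
           exact h1
         · rw [show ((A0 • u : V2) : Fin 2 → ℝ) 1 = (u:Fin 2 → ℝ) 1 by
             simpa using A0_smul u 1,
             show ((A0 • u : V2) : Fin 2 → ℝ) 0
               = (u:Fin 2 → ℝ) 0 + 3 * (u:Fin 2 → ℝ) 1 by simpa using A0_smul u 0]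
           nlinarith)
      | (constructor
         · rw [show ((B0 • u : V2) : Fin 2 → ℝ) 0 = (u:Fin 2 → ℝ) 0 by
             simpa using B0_smul u 0]
           exact h1
         · rw [show ((B0 • u : V2) : Fin 2 → ℝ) 0 = (u:Fin 2 → ℝ) 0 by
             simpa using B0_smul u 0,
             show ((B0 • u : V2) : Fin 2 → ℝ) 1
               = 3 * (u:Fin 2 → ℝ) 0 + (u:Fin 2 → ℝ) 1 by simpa using B0_smul u 1]
           nlinarith)
  · -- a⁻¹ i • (X i)ᶜ ⊆ Y i
    intro i
    fin_cases i <;> simp only [Fin.mk_zero, Fin.mk_one, Pi.inv_apply, Matrix.cons_val_zero,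
      Matrix.cons_val_one, Matrix.head_cons] <;>
    · rintro w ⟨u, hu, rfl⟩
      simp only [XS, Set.mem_compl_iff, Set.mem_setOf_eq, not_and_or, Matrix.cons_val_zero,
        Matrix.cons_val_one, Matrix.head_cons, not_le, not_ne_iff] at hu
      simp only [YS, Matrix.cons_val_zero, Matrix.cons_val_one, Matrix.head_cons,
        Set.mem_setOf_eq]
      first
      | (rw [show ((A0⁻¹ • u : V2) : Fin 2 → ℝ) 1 = (u:Fin 2 → ℝ) 1 by
             simpa using A0_inv_smul u 1,
           show ((A0⁻¹ • u : V2) : Fin 2 → ℝ) 0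
               = (u:Fin 2 → ℝ) 0 - 3 * (u:Fin 2 → ℝ) 1 by simpa using A0_inv_smul u 0]
         rcases hu with hu | hu
         · exact Or.inl hu
         · right; nlinarith)
      | (rw [show ((B0⁻¹ • u : V2) : Fin 2 → ℝ) 0 = (u:Fin 2 → ℝ) 0 by
             simpa using B0_inv_smul u 0,
           show ((B0⁻¹ • u : V2) : Fin 2 → ℝ) 1
               = -3 * (u:Fin 2 → ℝ) 0 + (u:Fin 2 → ℝ) 1 by simpa using B0_inv_smul u 1]
         rcases hu with hu | hu
         · exact Or.inl hu
         · right; nlinarith)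

open Polynomial in
def E12 {R : Type*} [CommRing R] (q : R) : Matrix.SpecialLinearGroup (Fin 2) R :=
  ⟨!![1, q; 0, 1], by simp [Matrix.det_fin_two_of]⟩

def E21 {R : Type*} [CommRing R] (q : R) : Matrix.SpecialLinearGroup (Fin 2) R :=
  ⟨!![1, 0; q, 1], by simp [Matrix.det_fin_two_of]⟩

theorem decomp (M : SL2) : ∃ p x y z : ℝ, E21 p * E12 x * E21 y * E12 z = M := by
  obtain ⟨a, b, c, d, hM⟩ : ∃ a b c d, (M : Matrix (Fin 2) (Fin 2) ℝ) = !![a,b;c,d] :=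
    ⟨_, _, _, _, Matrix.eta_fin_two _⟩
  have hdet : a * d - b * c = 1 := by
    have := M.2
    rw [hM, Matrix.det_fin_two_of] at this
    linarith
  by_cases hc : c ≠ 0
  · refine ⟨0, (a-1)/c, c, (d-1)/c, Subtype.ext ?_⟩
    simp only [Matrix.SpecialLinearGroup.coe_mul, hM]
    simp only [E12, E21]
    simp only [Matrix.mul_fin_two]
    ext i j
    fin_cases i <;> fin_cases j <;>
      simp only [Fin.zero_eta, Fin.mk_one, Matrix.of_apply, Matrix.cons_val', Matrix.cons_val_zero,
        Matrix.cons_val_one, Matrix.empty_val', Matrix.cons_val_fin_one] <;>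
      field_simp <;> ring_nf <;> nlinarith [hdet]
  · push_neg at hc
    have ha : a ≠ 0 := by
      intro h
      rw [h, hc] at hdet; simp at hdet
    refine ⟨-1, (a-1)/a, a, (b+d-1)/a, Subtype.ext ?_⟩
    simp only [Matrix.SpecialLinearGroup.coe_mul, hM]
    simp only [E12, E21]
    simp only [Matrix.mul_fin_two]
    ext i j
    rw [hc] at hdet
    fin_cases i <;> fin_cases j <;>
      simp only [Fin.zero_eta, Fin.mk_one, Matrix.of_apply, Matrix.cons_val', Matrix.cons_val_zero,
        Matrix.cons_val_one, Matrix.empty_val', Matrix.cons_val_fin_one, hc] <;>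
      field_simp <;> ring_nf <;> nlinarith [hdet]

open Polynomial

def evalSL (t : ℝ) : Matrix.SpecialLinearGroup (Fin 2) ℝ[X] →* SL2 :=
  Matrix.SpecialLinearGroup.map (Polynomial.evalRingHom t)

def liftSL : SL2 →* Matrix.SpecialLinearGroup (Fin 2) ℝ[X] :=
  Matrix.SpecialLinearGroup.map (Polynomial.C : ℝ →+* ℝ[X])

theorem evalSL_coe (t : ℝ) (P : Matrix.SpecialLinearGroup (Fin 2) ℝ[X]) (i j : Fin 2) :
    ((evalSL t P : SL2) : Matrix (Fin 2) (Fin 2) ℝ) i j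
      = ((P : Matrix (Fin 2) (Fin 2) ℝ[X]) i j).eval t := rfl

theorem evalSL_liftSL (t : ℝ) (A : SL2) : evalSL t (liftSL A) = A := by
  apply Subtype.ext
  ext i j
  simp [evalSL_coe, liftSL]

theorem evalSL_E12 (t : ℝ) (q : ℝ[X]) : evalSL t (E12 q) = E12 (q.eval t) := by
  apply Subtype.ext
  ext i j
  fin_cases i <;> fin_cases j <;> (rw [evalSL_coe]; simp [E12])

theorem evalSL_E21 (t : ℝ) (q : ℝ[X]) : evalSL t (E21 q) = E21 (q.eval t) := by
  apply Subtype.ext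
  ext i j
  fin_cases i <;> fin_cases j <;> (rw [evalSL_coe]; simp [E21])

theorem E12_zero : E12 (0:ℝ) = 1 := by
  apply Subtype.ext
  ext i j
  fin_cases i <;> fin_cases j <;> simp [E12]

theorem E21_zero : E21 (0:ℝ) = 1 := by
  apply Subtype.ext
  ext i j
  fin_cases i <;> fin_cases j <;> simp [E21]

theorem continuous_evalSL (P : Matrix.SpecialLinearGroup (Fin 2) ℝ[X]) :
    Continuous fun t => evalSL t P := by
  apply Continuous.subtype_mk
  apply continuous_matrix
  intro i j
  exact Polynomial.continuous _

/-- A polynomial path in `SL(2,ℝ)` from `A` to `T`. -/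
theorem exists_path (A T : SL2) :
    ∃ P : Matrix.SpecialLinearGroup (Fin 2) ℝ[X], evalSL 0 P = A ∧ evalSL 1 P = T := by
  obtain ⟨p, x, y, z, h⟩ := decomp (A⁻¹ * T)
  refine ⟨liftSL A * E21 (C p * X) * E12 (C x * X) * E21 (C y * X) * E12 (C z * X), ?_, ?_⟩
  · simp [_root_.map_mul, evalSL_liftSL, evalSL_E12, evalSL_E21, E12_zero, E21_zero]
  · simp only [_root_.map_mul, evalSL_liftSL, evalSL_E12, evalSL_E21, eval_mul, eval_C, eval_X, mul_one]
    have h2 : A * (A⁻¹ * T) = T := mul_inv_cancel_left A T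
    rw [← h] at h2
    rw [← h2]
    group

instance : Countable (FreeGroup (Fin 2)) := by
  unfold FreeGroup
  infer_instance

theorem eval_lift (t : ℝ) (PA PB : Matrix.SpecialLinearGroup (Fin 2) ℝ[X])
    (w : FreeGroup (Fin 2)) :
    evalSL t (FreeGroup.lift ![PA, PB] w)
      = FreeGroup.lift ![evalSL t PA, evalSL t PB] w := by
  have h : (evalSL t).comp (FreeGroup.lift ![PA, PB])
      = FreeGroup.lift ![evalSL t PA, evalSL t PB] :=
    FreeGroup.ext_hom _ _ (fun a => by fin_cases a <;> simp)
  exact DFunLike.congr_fun h w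

/-- The set of pairs `(A, B)` freely generating a free subgroup of rank two is dense in
`SL(2,ℝ) × SL(2,ℝ)`. -/
theorem stmt17 :
    Dense {p : Matrix.SpecialLinearGroup (Fin 2) ℝ × Matrix.SpecialLinearGroup (Fin 2) ℝ |
      Function.Injective
        (FreeGroup.lift ![p.1, p.2] :
          FreeGroup (Fin 2) →* Matrix.SpecialLinearGroup (Fin 2) ℝ)} := by
  rw [dense_iff_inter_open]
  rintro U hU ⟨q, hq⟩
  obtain ⟨PA, hPA0, hPA1⟩ := exists_path q.1 A0
  obtain ⟨PB, hPB0, hPB1⟩ := exists_path q.2 B0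
  set γ : ℝ → SL2 × SL2 := fun t => (evalSL t PA, evalSL t PB) with hγ
  have hcont : Continuous γ := (continuous_evalSL PA).prodMk (continuous_evalSL PB)
  have hV : IsOpen (γ ⁻¹' U) := hU.preimage hcont
  have h0 : (0:ℝ) ∈ γ ⁻¹' U := by
    have : γ 0 = q := Prod.ext (by simpa using hPA0) (by simpa using hPB0)
    simp [Set.mem_preimage, this, hq]
  set Bad : Set ℝ :=
    ⋃ w ∈ {w : FreeGroup (Fin 2) | w ≠ 1},
      {t : ℝ | evalSL t (FreeGroup.lift ![PA, PB] w) = 1} with hBadDef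
  have hBadc : Bad.Countable := by
    apply Set.Countable.biUnion (Set.to_countable _)
    intro w hw
    have hw' : w ≠ 1 := hw
    have hW : evalSL 1 (FreeGroup.lift ![PA, PB] w) ≠ 1 := by
      rw [eval_lift, hPA1, hPB1]
      intro h
      exact hw' (free_pair (by rw [h, _root_.map_one]))
    have hex : ∃ i j : Fin 2,
        (((FreeGroup.lift ![PA, PB] w : Matrix.SpecialLinearGroup (Fin 2) ℝ[X]) :
          Matrix (Fin 2) (Fin 2) ℝ[X]) i j).eval 1 ≠ (1 : Matrix (Fin 2) (Fin 2) ℝ) i j := by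
      by_contra hcon
      push_neg at hcon
      apply hW
      apply Subtype.ext
      ext i j
      rw [evalSL_coe, Matrix.SpecialLinearGroup.coe_one]
      exact hcon i j
    obtain ⟨i, j, hij⟩ := hex
    set qp : ℝ[X] := ((FreeGroup.lift ![PA, PB] w : Matrix.SpecialLinearGroup (Fin 2) ℝ[X]) :
        Matrix (Fin 2) (Fin 2) ℝ[X]) i j - C ((1 : Matrix (Fin 2) (Fin 2) ℝ) i j) with hqp
    have hq0 : qp ≠ 0 := by
      intro h
      apply hij
      have h2 := congrArg (Polynomial.eval 1) h
      simp only [hqp, eval_sub, eval_C, eval_zero, sub_eq_zero] at h2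
      exact h2
    apply Set.Countable.mono _ (Polynomial.finite_setOf_isRoot hq0).countable
    intro t ht
    simp only [Set.mem_setOf_eq] at ht ⊢
    have h3 : (((FreeGroup.lift ![PA, PB] w : Matrix.SpecialLinearGroup (Fin 2) ℝ[X]) :
        Matrix (Fin 2) (Fin 2) ℝ[X]) i j).eval t = (1 : Matrix (Fin 2) (Fin 2) ℝ) i j := by
      rw [← evalSL_coe, ht, Matrix.SpecialLinearGroup.coe_one]
    simp [Polynomial.IsRoot, hqp, h3]
  have hdense : Dense Badᶜ := hBadc.dense_compl ℝ
  obtain ⟨t, htU, htBad⟩ := hdense.inter_open_nonempty _ hV ⟨0, h0⟩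
  refine ⟨γ t, htU, ?_⟩
  rw [Set.mem_setOf_eq, injective_iff_map_eq_one]
  intro w hw1
  by_contra hw
  apply htBad
  apply Set.mem_biUnion (show w ∈ {w : FreeGroup (Fin 2) | w ≠ 1} from hw)
  show evalSL t (FreeGroup.lift ![PA, PB] w) = 1
  rw [eval_lift]
  exact hw1
end
end
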